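/- arXiv:1603.00527 — 8 statements merged into one kernel-verified Lean document; each statement's English description precedes it below -/
import Mathlib

section
/- Suppose (B,Q) is a numéraire–martingale measure couple and the fair FRA rates satisfy L_t(T,T+δ_i) = E^{Q^{T+δ_i}}[L_T(T,T+δ_i) | F_t]. Then for every i = 1,…,m and all 0 ≤ t ≤ T ≤ 𝕋, the multiplicative spread S^{δ_i}(t,T) := (1+δ_i L_t(T,T+δ_i)) B(t,T+δ_i)/B(t,T) satisfies S^{δ_i}(t,T) = E^{Q^T}[S^{δ_i}(T,T) | F_t] Q-almost surely; that is, (S^{δ_i}(t,T))_{0≤t≤T} is a martingale under the T-forward measure Q^T. -/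
open MeasureTheory


open MeasureTheory Filter ENNReal

namespace Stmt2Aux

variable {Ω : Type*} {m0 : MeasurableSpace Ω} {Q : Measure Ω}

lemma sm_min_abs {M : MeasurableSpace Ω} {X : Ω → ℝ} (hX : Measurable[M] X) (n : ℕ) :
    StronglyMeasurable[M] fun ω => min |X ω| (n : ℝ) :=
  (hX.abs.min measurable_const).stronglyMeasurable

lemma lint_trunc {X Z : Ω → ℝ} (hX : Measurable X) (hZint : Integrable Z Q)
    (hZ0 : 0 ≤ᵐ[Q] Z) :
    ∫⁻ ω, ENNReal.ofReal (|X ω| * Z ω) ∂Q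
      = ⨆ n : ℕ, ENNReal.ofReal (∫ ω, min |X ω| (n : ℝ) * Z ω ∂Q) := by
  have hmin : ∀ n : ℕ, Integrable (fun ω => min |X ω| (n : ℝ) * Z ω) Q := by
    intro n
    refine hZint.bdd_mul ((hX.abs.min measurable_const).aestronglyMeasurable) (c := n) (ae_of_all _ fun ω => ?_)
    rw [Real.norm_eq_abs, abs_of_nonneg (le_min (abs_nonneg _) (Nat.cast_nonneg n))]
    exact min_le_right _ _
  calc ∫⁻ ω, ENNReal.ofReal (|X ω| * Z ω) ∂Q
      = ∫⁻ ω, ⨆ n : ℕ, ENNReal.ofReal (min |X ω| (n : ℝ) * Z ω) ∂Q := by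
        refine lintegral_congr_ae ?_
        filter_upwards [hZ0] with ω hω
        refine le_antisymm ?_ (iSup_le fun n => ENNReal.ofReal_le_ofReal
          (mul_le_mul_of_nonneg_right (min_le_left _ _) hω))
        refine le_iSup_of_le ⌈|X ω|⌉₊ (le_of_eq ?_)
        rw [min_eq_left (Nat.le_ceil _)]
    _ = ⨆ n : ℕ, ∫⁻ ω, ENNReal.ofReal (min |X ω| (n : ℝ) * Z ω) ∂Q := by
        refine lintegral_iSup' (fun n => ?_) ?_
        · exact (((hX.abs.min measurable_const).aemeasurable).mul
            hZint.aemeasurable).ennreal_ofReal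
        · filter_upwards [hZ0] with ω hω
          intro a b hab
          exact ENNReal.ofReal_le_ofReal (mul_le_mul_of_nonneg_right
            (min_le_min le_rfl (Nat.cast_le.2 hab)) hω)
    _ = ⨆ n : ℕ, ENNReal.ofReal (∫ ω, min |X ω| (n : ℝ) * Z ω ∂Q) := by
        refine iSup_congr fun n => ?_
        refine (ofReal_integral_eq_lintegral_ofReal (hmin n) ?_).symm
        filter_upwards [hZ0] with ω hω
        exact mul_nonneg (le_min (abs_nonneg _) (Nat.cast_nonneg n)) hω

lemma lint_mul_condexp {m : MeasurableSpace Ω} (hm : m ≤ m0) [SigmaFinite (Q.trim hm)]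
    {X Y : Ω → ℝ} (hX : StronglyMeasurable[m] X) (hY : Integrable Y Q) (hY0 : 0 ≤ Y) :
    ∫⁻ ω, ENNReal.ofReal (|X ω| * Y ω) ∂Q
      = ∫⁻ ω, ENNReal.ofReal (|X ω| * (Q[Y|m]) ω) ∂Q := by
  have hXm0 : Measurable[m0] X := (hX.mono hm).measurable
  have key : ∀ n : ℕ, ∫ ω, min |X ω| (n : ℝ) * Y ω ∂Q
      = ∫ ω, min |X ω| (n : ℝ) * (Q[Y|m]) ω ∂Q := by
    intro n
    have hXn : StronglyMeasurable[m] (fun ω => min |X ω| (n : ℝ)) :=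
      sm_min_abs hX.measurable n
    have hXnm0 : Measurable[m0] fun ω => min |X ω| (n : ℝ) :=
      (sm_min_abs hXm0 n).measurable
    have h1 : Integrable ((fun ω => min |X ω| (n : ℝ)) * Y) Q := by
      refine hY.bdd_mul hXnm0.aestronglyMeasurable (c := n) (ae_of_all _ fun ω => ?_)
      rw [Real.norm_eq_abs, abs_of_nonneg (le_min (abs_nonneg _) (Nat.cast_nonneg n))]
      exact min_le_right _ _
    have h2 := condExp_mul_of_stronglyMeasurable_left hXn h1 hY
    have h3 : ∫ ω, ((fun ω => min |X ω| (n : ℝ)) * Y) ω ∂Q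
        = ∫ ω, min |X ω| (n : ℝ) * (Q[Y|m]) ω ∂Q := by
      rw [← integral_condExp hm]
      exact integral_congr_ae (h2.mono fun ω hω => hω)
    exact h3
  rw [lint_trunc hXm0 hY (ae_of_all _ hY0),
    lint_trunc hXm0 integrable_condExp (condExp_nonneg (ae_of_all _ hY0))]
  exact iSup_congr fun n => by rw [key n]

lemma integrable_mul_condexp_iff {m : MeasurableSpace Ω} (hm : m ≤ m0)
    [SigmaFinite (Q.trim hm)] {X Y : Ω → ℝ}
    (hX : StronglyMeasurable[m] X) (hY : Integrable Y Q) (hY0 : 0 ≤ Y) :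
    Integrable (fun ω => X ω * Y ω) Q ↔ Integrable (fun ω => X ω * (Q[Y|m]) ω) Q := by
  have hlint := lint_mul_condexp hm hX hY hY0
  have hsm1 : AEStronglyMeasurable[m0] (fun ω => X ω * Y ω) Q :=
    ((hX.mono hm).aestronglyMeasurable).mul hY.1
  have hsm2 : AEStronglyMeasurable[m0] (fun ω => X ω * (Q[Y|m]) ω) Q :=
    ((hX.mono hm).aestronglyMeasurable).mul
      ((stronglyMeasurable_condExp.mono hm).aestronglyMeasurable)
  have e1 : ∫⁻ ω, ENNReal.ofReal ‖X ω * Y ω‖ ∂Q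
      = ∫⁻ ω, ENNReal.ofReal (|X ω| * Y ω) ∂Q := by
    refine lintegral_congr fun ω => ?_
    rw [Real.norm_eq_abs, abs_mul, abs_of_nonneg (hY0 ω)]
  have e2 : ∫⁻ ω, ENNReal.ofReal ‖X ω * (Q[Y|m]) ω‖ ∂Q
      = ∫⁻ ω, ENNReal.ofReal (|X ω| * (Q[Y|m]) ω) ∂Q := by
    refine lintegral_congr_ae ?_
    filter_upwards [condExp_nonneg (μ := Q) (m := m) (ae_of_all _ hY0)] with ω hω
    rw [Real.norm_eq_abs, abs_mul, abs_of_nonneg hω]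
  constructor <;> intro h
  · refine ⟨hsm2, ?_⟩
    rw [hasFiniteIntegral_iff_norm, e2, ← hlint, ← e1, ← hasFiniteIntegral_iff_norm]
    exact h.2
  · refine ⟨hsm1, ?_⟩
    rw [hasFiniteIntegral_iff_norm, e1, hlint, ← e2, ← hasFiniteIntegral_iff_norm]
    exact h.2

lemma setIntegral_mul_condexp {m : MeasurableSpace Ω} (hm : m ≤ m0)
    [SigmaFinite (Q.trim hm)] {X Y : Ω → ℝ} (hX : StronglyMeasurable[m] X)
    (hXY : Integrable (fun ω => X ω * Y ω) Q) (hY : Integrable Y Q)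
    {A : Set Ω} (hA : MeasurableSet[m] A) :
    ∫ ω in A, X ω * Y ω ∂Q = ∫ ω in A, X ω * (Q[Y|m]) ω ∂Q := by
  have h2 := condExp_mul_of_stronglyMeasurable_left hX hXY hY
  rw [← setIntegral_condExp hm hXY hA]
  exact integral_congr_ae (ae_restrict_of_ae (h2.mono fun ω hω => hω))

lemma setIntegral_withDensity_ofReal {d : Ω → ℝ} (hd : Measurable d) (hd0 : 0 ≤ d)
    (f : Ω → ℝ) {A : Set Ω} (hA : MeasurableSet A) :
    ∫ ω in A, f ω ∂(Q.withDensity fun ω => ENNReal.ofReal (d ω))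
      = ∫ ω in A, d ω * f ω ∂Q := by
  have h : (fun ω => ENNReal.ofReal (d ω)) = fun ω => ((d ω).toNNReal : ℝ≥0∞) := rfl
  rw [h, setIntegral_withDensity_eq_setIntegral_smul hd.real_toNNReal f hA]
  refine setIntegral_congr_ae hA (ae_of_all _ fun ω _ => ?_)
  rw [NNReal.smul_def, Real.coe_toNNReal _ (hd0 ω), smul_eq_mul]

lemma integrable_withDensity_ofReal_iff {d : Ω → ℝ} (hd : Measurable d) (hd0 : 0 ≤ d)
    {f : Ω → ℝ} :
    Integrable f (Q.withDensity fun ω => ENNReal.ofReal (d ω))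
      ↔ Integrable (fun ω => f ω * d ω) Q := by
  rw [integrable_withDensity_iff hd.ennreal_ofReal (ae_of_all _ fun ω => ENNReal.ofReal_lt_top)]
  constructor <;> intro h <;> refine h.congr (ae_of_all _ fun ω => ?_) <;>
    simp [ENNReal.toReal_ofReal (hd0 ω)]

end Stmt2Aux


open MeasureTheory Filter ENNReal

namespace Stmt2Aux

lemma main_aux {Ω : Type*} {m0 : MeasurableSpace Ω} (Q : Measure Ω) [IsProbabilityMeasure Q]
    (ℱ : Filtration ℝ m0) (t T S : ℝ) (ht : 0 ≤ t) (htT : t ≤ T) (hTS : T ≤ S)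
    (B : ℝ → Ω → ℝ) (hBpos : ∀ u ω, 0 < B u ω) (hBadapt : ∀ u, StronglyMeasurable[ℱ u] (B u))
    (P : ℝ → ℝ → Ω → ℝ) (hPpos : ∀ u v ω, 0 < P u v ω)
    (hPadapt : ∀ u v, StronglyMeasurable[ℱ u] (P u v))
    (hPTT : ∀ u ω, P u u ω = 1)
    (hPInt : ∀ u v, 0 ≤ u → u ≤ v → Integrable (fun ω => P u v ω / B u ω) Q)
    (hPMart : ∀ s u v, 0 ≤ s → s ≤ u → u ≤ v →
      Q[fun ω => P u v ω / B u ω | ℱ s] =ᵐ[Q] fun ω => P s v ω / B s ω)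
    (δ : ℝ) (ℓt ℓT : Ω → ℝ)
    (hℓt : StronglyMeasurable[ℱ t] ℓt) (hℓT : StronglyMeasurable[ℱ T] ℓT)
    (hIT : Integrable (fun ω => ℓT ω * (B S ω)⁻¹) Q)
    (hIt : Integrable (fun ω => ℓt ω * (B S ω)⁻¹) Q)
    (hms : ∀ A : Set Ω, MeasurableSet[ℱ t] A →
      ∫ ω in A, ℓT ω * (B S ω)⁻¹ ∂Q = ∫ ω in A, ℓt ω * (B S ω)⁻¹ ∂Q) :
    (fun ω => (1 + δ * ℓt ω) * P t S ω / P t T ω) =ᵐ[Q]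
      (Q.withDensity fun ω => ENNReal.ofReal ((B T ω * ∫ ω', (B T ω')⁻¹ ∂Q)⁻¹))[
        fun ω => (1 + δ * ℓT ω) * P T S ω / P T T ω | ℱ t] := by
  have hm : (ℱ t : MeasurableSpace Ω) ≤ m0 := ℱ.le t
  have hmT : (ℱ T : MeasurableSpace Ω) ≤ m0 := ℱ.le T
  have hT0 : 0 ≤ T := ht.trans htT
  have hS0 : 0 ≤ S := hT0.trans hTS
  have htS : t ≤ S := htT.trans hTS
  -- integrability and positivity of the inverse numéraires
  have hW1meas : Measurable (fun ω => (B T ω)⁻¹) := (((hBadapt T).mono hmT).measurable).inv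
  have hW1int : Integrable (fun ω => (B T ω)⁻¹) Q :=
    (hPInt T T hT0 le_rfl).congr (ae_of_all _ fun ω => by simp [hPTT])
  have hW2int : Integrable (fun ω => (B S ω)⁻¹) Q :=
    (hPInt S S hS0 le_rfl).congr (ae_of_all _ fun ω => by simp [hPTT])
  have hW1pos : ∀ ω, 0 < (B T ω)⁻¹ := fun ω => inv_pos.2 (hBpos T ω)
  have hW2pos : ∀ ω, 0 < (B S ω)⁻¹ := fun ω => inv_pos.2 (hBpos S ω)
  set c1 : ℝ := ∫ ω', (B T ω')⁻¹ ∂Q with hc1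
  have hc1pos : 0 < c1 := by
    rw [hc1, integral_pos_iff_support_of_nonneg (fun ω => (hW1pos ω).le) hW1int]
    have hs : Function.support (fun ω => (B T ω)⁻¹) = Set.univ :=
      Set.eq_univ_of_forall fun ω => (hW1pos ω).ne'
    rw [hs]
    simp
  -- the density of the `T`-forward measure
  have hd1meas : Measurable (fun ω => (B T ω * c1)⁻¹) :=
    ((((hBadapt T).mono hmT).measurable).mul_const c1).inv
  have hd1pos : ∀ ω, 0 < (B T ω * c1)⁻¹ := fun ω => inv_pos.2 (mul_pos (hBpos T ω) hc1pos)
  have hd1int : Integrable (fun ω => (B T ω * c1)⁻¹) Q :=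
    (hW1int.mul_const c1⁻¹).congr (ae_of_all _ fun ω => by simp only [mul_inv]; try ring)
  set μ := Q.withDensity (fun ω => ENNReal.ofReal ((B T ω * c1)⁻¹)) with hμdef
  have hμuniv : μ Set.univ = 1 := by
    rw [hμdef, withDensity_apply _ MeasurableSet.univ, Measure.restrict_univ,
      ← ofReal_integral_eq_lintegral_ofReal hd1int (ae_of_all _ fun ω => (hd1pos ω).le)]
    have h1 : ∫ ω, (B T ω * c1)⁻¹ ∂Q = 1 := by
      have e : ∫ ω, (B T ω * c1)⁻¹ ∂Q = (∫ ω, (B T ω)⁻¹ ∂Q) * c1⁻¹ := by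
        rw [← integral_mul_const]
        exact integral_congr_ae (ae_of_all _ fun ω => by simp only [mul_inv]; try ring)
      rw [e, ← hc1, mul_inv_cancel₀ hc1pos.ne']
    rw [h1, ENNReal.ofReal_one]
  haveI hμprob : IsProbabilityMeasure μ := ⟨hμuniv⟩
  -- conditional expectation identities from the bond martingale property
  have hcW2T : Q[fun ω => (B S ω)⁻¹ | ℱ T] =ᵐ[Q] fun ω => P T S ω / B T ω := by
    have h := hPMart T S S hT0 hTS le_rfl
    rwa [show (fun ω => P S S ω / B S ω) = (fun ω => (B S ω)⁻¹) from
      funext fun ω => by simp [hPTT]] at h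
  have hcW2t : Q[fun ω => (B S ω)⁻¹ | ℱ t] =ᵐ[Q] fun ω => P t S ω / B t ω := by
    have h := hPMart t S S ht htS le_rfl
    rwa [show (fun ω => P S S ω / B S ω) = (fun ω => (B S ω)⁻¹) from
      funext fun ω => by simp [hPTT]] at h
  have hcW1t : Q[fun ω => (B T ω)⁻¹ | ℱ t] =ᵐ[Q] fun ω => P t T ω / B t ω := by
    have h := hPMart t T T ht htT le_rfl
    rwa [show (fun ω => P T T ω / B T ω) = (fun ω => (B T ω)⁻¹) from
      funext fun ω => by simp [hPTT]] at h
  have hc4 : Q[fun ω => P T S ω / B T ω | ℱ t] =ᵐ[Q] fun ω => P t S ω / B t ω :=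
    hPMart t T S ht htT hTS
  -- integrability of the various products
  have IℓT2 : Integrable (fun ω => ℓT ω * (P T S ω / B T ω)) Q := by
    have h := (integrable_mul_condexp_iff hmT hℓT hW2int (fun ω => (hW2pos ω).le)).mp hIT
    exact h.congr (by filter_upwards [hcW2T] with ω hω; rw [hω])
  have Iℓt2 : Integrable (fun ω => ℓt ω * (P t S ω / B t ω)) Q := by
    have h := (integrable_mul_condexp_iff hm hℓt hW2int (fun ω => (hW2pos ω).le)).mp hIt
    exact h.congr (by filter_upwards [hcW2t] with ω hω; rw [hω])
  have hZtSM : StronglyMeasurable[ℱ t] (fun ω => (1 + δ * ℓt ω) * P t S ω / P t T ω) :=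
    (((measurable_const.add (measurable_const.mul hℓt.measurable)).mul
      (hPadapt t S).measurable).div (hPadapt t T).measurable).stronglyMeasurable
  have ecancel : ∀ ω, ((1 + δ * ℓt ω) * P t S ω / P t T ω) * (P t T ω / B t ω)
      = P t S ω / B t ω + δ * (ℓt ω * (P t S ω / B t ω)) := by
    intro ω
    have h1 : P t T ω ≠ 0 := (hPpos t T ω).ne'
    have h2 : B t ω ≠ 0 := (hBpos t ω).ne'
    field_simp
  have IZt1 : Integrable (fun ω => ((1 + δ * ℓt ω) * P t S ω / P t T ω) * (B T ω)⁻¹) Q := by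
    refine (integrable_mul_condexp_iff hm hZtSM hW1int (fun ω => (hW1pos ω).le)).mpr ?_
    refine Integrable.congr (f := fun ω => ((1 + δ * ℓt ω) * P t S ω / P t T ω)
      * (P t T ω / B t ω)) ?_ (by filter_upwards [hcW1t] with ω hω; rw [hω])
    refine ((hPInt t S ht htS).add (Iℓt2.const_mul δ)).congr
      (ae_of_all _ fun ω => (ecancel ω).symm)
  have eT : ∀ ω, ((1 + δ * ℓT ω) * P T S ω / P T T ω) * (B T ω)⁻¹
      = P T S ω / B T ω + δ * (ℓT ω * (P T S ω / B T ω)) := by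
    intro ω
    rw [hPTT]
    have h2 : B T ω ≠ 0 := (hBpos T ω).ne'
    field_simp
  have IZT1 : Integrable (fun ω => ((1 + δ * ℓT ω) * P T S ω / P T T ω) * (B T ω)⁻¹) Q :=
    ((hPInt T S hT0 hTS).add (IℓT2.const_mul δ)).congr (ae_of_all _ fun ω => (eT ω).symm)
  have IZTμ : Integrable (fun ω => (1 + δ * ℓT ω) * P T S ω / P T T ω) μ := by
    rw [hμdef, integrable_withDensity_ofReal_iff hd1meas (fun ω => (hd1pos ω).le)]
    exact (IZT1.mul_const c1⁻¹).congr (ae_of_all _ fun ω => by simp only [mul_inv]; ring)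
  have IZtμ : Integrable (fun ω => (1 + δ * ℓt ω) * P t S ω / P t T ω) μ := by
    rw [hμdef, integrable_withDensity_ofReal_iff hd1meas (fun ω => (hd1pos ω).le)]
    exact (IZt1.mul_const c1⁻¹).congr (ae_of_all _ fun ω => by simp only [mul_inv]; ring)
  -- the key characterization of the conditional expectation under `μ`
  have key : (fun ω => (1 + δ * ℓt ω) * P t S ω / P t T ω) =ᵐ[μ]
      μ[fun ω => (1 + δ * ℓT ω) * P T S ω / P T T ω | ℱ t] := by
    refine ae_eq_condExp_of_forall_setIntegral_eq hm IZTμ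
      (fun A hA _ => IZtμ.integrableOn) (fun A hA _ => ?_) hZtSM.aestronglyMeasurable
    have hA0 : MeasurableSet A := hm A hA
    have hAT : MeasurableSet[ℱ T] A := (ℱ.mono htT) A hA
    rw [hμdef, setIntegral_withDensity_ofReal hd1meas (fun ω => (hd1pos ω).le) _ hA0,
      setIntegral_withDensity_ofReal hd1meas (fun ω => (hd1pos ω).le) _ hA0]
    have eL : ∀ ω, (B T ω * c1)⁻¹ * ((1 + δ * ℓt ω) * P t S ω / P t T ω)
        = c1⁻¹ * (((1 + δ * ℓt ω) * P t S ω / P t T ω) * (B T ω)⁻¹) := fun ω => by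
      rw [mul_inv]; ring
    have eR : ∀ ω, (B T ω * c1)⁻¹ * ((1 + δ * ℓT ω) * P T S ω / P T T ω)
        = c1⁻¹ * (((1 + δ * ℓT ω) * P T S ω / P T T ω) * (B T ω)⁻¹) := fun ω => by
      rw [mul_inv]; ring
    rw [setIntegral_congr_ae hA0 (ae_of_all _ fun ω _ => eL ω),
      setIntegral_congr_ae hA0 (ae_of_all _ fun ω _ => eR ω),
      integral_const_mul, integral_const_mul]
    congr 1
    -- now reduce both sides to `∫_A P t S / B t + δ ∫_A ℓt ⬝ (P t S / B t)`
    have hLHS : ∫ ω in A, ((1 + δ * ℓt ω) * P t S ω / P t T ω) * (B T ω)⁻¹ ∂Q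
        = ∫ ω in A, P t S ω / B t ω ∂Q + δ * ∫ ω in A, ℓt ω * (P t S ω / B t ω) ∂Q := by
      rw [setIntegral_mul_condexp hm hZtSM IZt1 hW1int hA]
      rw [setIntegral_congr_ae hA0 (by filter_upwards [hcW1t] with ω hω _; rw [hω] :
        ∀ᵐ ω ∂Q, ω ∈ A → ((1 + δ * ℓt ω) * P t S ω / P t T ω) * (Q[fun ω => (B T ω)⁻¹|ℱ t]) ω
          = ((1 + δ * ℓt ω) * P t S ω / P t T ω) * (P t T ω / B t ω))]
      rw [setIntegral_congr_ae hA0 (ae_of_all _ fun ω _ => ecancel ω)]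
      rw [integral_add ((hPInt t S ht htS).integrableOn) ((Iℓt2.const_mul δ).integrableOn),
        integral_const_mul]
    have hRHS : ∫ ω in A, ((1 + δ * ℓT ω) * P T S ω / P T T ω) * (B T ω)⁻¹ ∂Q
        = ∫ ω in A, P t S ω / B t ω ∂Q + δ * ∫ ω in A, ℓt ω * (P t S ω / B t ω) ∂Q := by
      rw [setIntegral_congr_ae hA0 (ae_of_all _ fun ω _ => eT ω)]
      rw [integral_add ((hPInt T S hT0 hTS).integrableOn) ((IℓT2.const_mul δ).integrableOn),
        integral_const_mul]
      congr 1
      · rw [← setIntegral_condExp hm (hPInt T S hT0 hTS) hA]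
        exact setIntegral_congr_ae hA0 (by filter_upwards [hc4] with ω hω _; rw [hω])
      · congr 1
        calc ∫ ω in A, ℓT ω * (P T S ω / B T ω) ∂Q
            = ∫ ω in A, ℓT ω * (B S ω)⁻¹ ∂Q := by
              have h1 : ∫ ω in A, ℓT ω * (P T S ω / B T ω) ∂Q
                  = ∫ ω in A, ℓT ω * (Q[fun ω => (B S ω)⁻¹|ℱ T]) ω ∂Q :=
                setIntegral_congr_ae hA0 (by filter_upwards [hcW2T] with ω hω _; rw [hω])
              rw [h1, ← setIntegral_mul_condexp hmT hℓT hIT hW2int hAT]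
          _ = ∫ ω in A, ℓt ω * (B S ω)⁻¹ ∂Q := hms A hA
          _ = ∫ ω in A, ℓt ω * (P t S ω / B t ω) ∂Q := by
              rw [setIntegral_mul_condexp hm hℓt hIt hW2int hA]
              exact setIntegral_congr_ae hA0
                (by filter_upwards [hcW2t] with ω hω _; rw [hω])
    rw [hLHS, hRHS]
  have hne : ∀ᵐ ω ∂Q, (fun ω => ENNReal.ofReal ((B T ω * c1)⁻¹)) ω ≠ 0 :=
    ae_of_all _ fun ω => (ENNReal.ofReal_pos.mpr (hd1pos ω)).ne'
  exact (withDensity_ae_eq hd1meas.ennreal_ofReal.aemeasurable hne).mp key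

end Stmt2Aux

open Stmt2Aux Filter ENNReal

/-- If `(B,Q)` is a numéraire–martingale measure couple and the fair FRA rates
satisfy `L_t(T,T+δ i) = E^{Q^{T+δ i}}[L_T(T,T+δ i) | F_t]`, then for every `i` and all
`0 ≤ t ≤ T ≤ 𝕋` the multiplicative spread
`S^{δ i}(t,T) := (1 + δ i L_t(T,T+δ i)) B(t,T+δ i) / B(t,T)` satisfies
`S^{δ i}(t,T) = E^{Q^T}[S^{δ i}(T,T) | F_t]` `Q`-a.s., i.e. it is a martingale under the
`T`-forward measure `dQ^T/dQ = 1/(B_T B(0,T))`. -/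
theorem stmt_2
    {Ω : Type*} {m0 : MeasurableSpace Ω} (Q : Measure Ω) [IsProbabilityMeasure Q]
    (𝕋 : ℝ) (ℱ : Filtration ℝ m0)
    -- the finite set of tenors `δ 0 < … < δ (m-1)`, all positive
    (m : ℕ) (δ : Fin m → ℝ) (hδpos : ∀ i, 0 < δ i) (hδmono : StrictMono δ)
    -- the numéraire process: strictly positive, adapted, with `B 0 = 1`
    (B : ℝ → Ω → ℝ)
    (hBpos : ∀ t ω, 0 < B t ω)
    (hB0 : ∀ ω, B 0 ω = 1)
    (hBadapt : ∀ t, StronglyMeasurable[ℱ t] (B t))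
    -- OIS bond prices `P t T = B(t,T)`: positive, adapted, `B(T,T)=1`, discounted martingale
    (P : ℝ → ℝ → Ω → ℝ)
    (hPpos : ∀ t T ω, 0 < P t T ω)
    (hPadapt : ∀ t T, StronglyMeasurable[ℱ t] (P t T))
    (hPTT : ∀ T ω, P T T ω = 1)
    (hPInt : ∀ t T, 0 ≤ t → t ≤ T → Integrable (fun ω => P t T ω / B t ω) Q)
    (hPMart : ∀ s t T, 0 ≤ s → s ≤ t → t ≤ T →
      Q[fun ω => P t T ω / B t ω | ℱ s] =ᵐ[Q] fun ω => P s T ω / B s ω)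
    -- fair FRA rates: `L i t T = L_t(T, T+δ i)`, adapted, and martingales under the
    -- `(T+δ i)`-forward measures `dQ^{T+δ i}/dQ = 1/(B_{T+δ i} B(0,T+δ i))`
    (L : Fin m → ℝ → ℝ → Ω → ℝ)
    (hLadapt : ∀ i t T, StronglyMeasurable[ℱ t] (L i t T))
    (hLmart : ∀ i t T, 0 ≤ t → t ≤ T → T ≤ 𝕋 →
      L i t T =ᵐ[Q]
        (Q.withDensity (fun ω =>
            ENNReal.ofReal ((B (T + δ i) ω * ∫ ω', (B (T + δ i) ω')⁻¹ ∂Q)⁻¹)))[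
          fun ω => L i T T ω | ℱ t])
    -- conclusion: the multiplicative spread is a martingale under the `T`-forward measure
    (i : Fin m) (t T : ℝ) (ht : 0 ≤ t) (htT : t ≤ T) (hT𝕋 : T ≤ 𝕋) :
    (fun ω => (1 + δ i * L i t T ω) * P t (T + δ i) ω / P t T ω) =ᵐ[Q]
      (Q.withDensity (fun ω =>
          ENNReal.ofReal ((B T ω * ∫ ω', (B T ω')⁻¹ ∂Q)⁻¹)))[
        fun ω => (1 + δ i * L i T T ω) * P T (T + δ i) ω / P T T ω | ℱ t] := by
  have hm : (ℱ t : MeasurableSpace Ω) ≤ m0 := ℱ.le t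
  have hT0 : (0:ℝ) ≤ T := ht.trans htT
  have hTS : T ≤ T + δ i := le_add_of_nonneg_right (hδpos i).le
  have hS0 : (0:ℝ) ≤ T + δ i := hT0.trans hTS
  -- facts about the `(T+δ i)`-forward measure ν
  have hW2meas : Measurable (fun ω => (B (T + δ i) ω)⁻¹) :=
    (((hBadapt (T + δ i)).mono (ℱ.le (T + δ i))).measurable).inv
  have hW2int : Integrable (fun ω => (B (T + δ i) ω)⁻¹) Q :=
    (hPInt (T + δ i) (T + δ i) hS0 le_rfl).congr (ae_of_all _ fun ω => by simp [hPTT])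
  have hW2pos : ∀ ω, 0 < (B (T + δ i) ω)⁻¹ := fun ω => inv_pos.2 (hBpos _ ω)
  set c2 : ℝ := ∫ ω', (B (T + δ i) ω')⁻¹ ∂Q with hc2
  have hc2pos : 0 < c2 := by
    rw [hc2, integral_pos_iff_support_of_nonneg (fun ω => (hW2pos ω).le) hW2int]
    have hs : Function.support (fun ω => (B (T + δ i) ω)⁻¹) = Set.univ :=
      Set.eq_univ_of_forall fun ω => (hW2pos ω).ne'
    rw [hs]
    simp
  have hd2meas : Measurable (fun ω => (B (T + δ i) ω * c2)⁻¹) :=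
    ((((hBadapt (T + δ i)).mono (ℱ.le (T + δ i))).measurable).mul_const c2).inv
  have hd2pos : ∀ ω, 0 < (B (T + δ i) ω * c2)⁻¹ :=
    fun ω => inv_pos.2 (mul_pos (hBpos _ ω) hc2pos)
  have hd2int : Integrable (fun ω => (B (T + δ i) ω * c2)⁻¹) Q :=
    (hW2int.mul_const c2⁻¹).congr (ae_of_all _ fun ω => by simp only [mul_inv]; try ring)
  set ν := Q.withDensity (fun ω => ENNReal.ofReal ((B (T + δ i) ω * c2)⁻¹)) with hν
  haveI hνfin : IsFiniteMeasure ν := by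
    constructor
    rw [hν, withDensity_apply _ MeasurableSet.univ, Measure.restrict_univ,
      ← ofReal_integral_eq_lintegral_ofReal hd2int (ae_of_all _ fun ω => (hd2pos ω).le)]
    exact ENNReal.ofReal_lt_top
  have hνac : ν ≪ Q := hν ▸ withDensity_absolutelyContinuous Q _
  have hlt := hLmart i t T ht htT hT𝕋
  have hlT := hLmart i T T hT0 le_rfl hT𝕋
  rw [← hν] at hlt hlT
  -- the three inputs to `main_aux`, by cases on `ν`-integrability of the terminal rate
  obtain ⟨hIT, hIt, hms⟩ :
      Integrable (fun ω => L i T T ω * (B (T + δ i) ω)⁻¹) Q ∧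
      Integrable (fun ω => L i t T ω * (B (T + δ i) ω)⁻¹) Q ∧
      (∀ A : Set Ω, MeasurableSet[ℱ t] A →
        ∫ ω in A, L i T T ω * (B (T + δ i) ω)⁻¹ ∂Q
          = ∫ ω in A, L i t T ω * (B (T + δ i) ω)⁻¹ ∂Q) := by
    by_cases hint : Integrable (fun ω => L i T T ω) ν
    · have hiff : ∀ f : Ω → ℝ, Integrable f ν ↔
          Integrable (fun ω => f ω * (B (T + δ i) ω * c2)⁻¹) Q := fun f => by
        rw [hν]
        exact integrable_withDensity_ofReal_iff hd2meas (fun ω => (hd2pos ω).le)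
      have hconv : ∀ ω, ∀ x : ℝ, (x * (B (T + δ i) ω * c2)⁻¹) * c2
          = x * (B (T + δ i) ω)⁻¹ := fun ω x => by
        have h1 : B (T + δ i) ω ≠ 0 := (hBpos _ ω).ne'
        have h2 : c2 ≠ 0 := hc2pos.ne'
        field_simp
      have hltν : (fun ω => L i t T ω) =ᵐ[ν] ν[fun ω => L i T T ω|ℱ t] := hνac.ae_eq hlt
      have hltint : Integrable (fun ω => L i t T ω) ν := integrable_condExp.congr hltν.symm
      have hIT : Integrable (fun ω => L i T T ω * (B (T + δ i) ω)⁻¹) Q :=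
        (((hiff _).mp hint).mul_const c2).congr (ae_of_all _ fun ω => hconv ω _)
      have hIt : Integrable (fun ω => L i t T ω * (B (T + δ i) ω)⁻¹) Q :=
        (((hiff _).mp hltint).mul_const c2).congr (ae_of_all _ fun ω => hconv ω _)
      refine ⟨hIT, hIt, fun A hA => ?_⟩
      have hA0 : MeasurableSet A := hm A hA
      have h2 : ∀ f : Ω → ℝ, ∫ ω in A, f ω ∂ν
          = ∫ ω in A, (B (T + δ i) ω * c2)⁻¹ * f ω ∂Q := fun f => by
        rw [hν]
        exact setIntegral_withDensity_ofReal hd2meas (fun ω => (hd2pos ω).le) f hA0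
      have h1 : ∫ ω in A, L i T T ω ∂ν = ∫ ω in A, L i t T ω ∂ν := by
        rw [← setIntegral_condExp hm hint hA]
        exact setIntegral_congr_ae hA0 (hltν.symm.mono fun ω hω _ => hω)
      have hptw : ∀ f : Ω → ℝ, ∀ ω,
          f ω * (B (T + δ i) ω)⁻¹ = c2 * ((B (T + δ i) ω * c2)⁻¹ * f ω) := fun f ω => by
        have h1 : B (T + δ i) ω ≠ 0 := (hBpos _ ω).ne'
        have h2 : c2 ≠ 0 := hc2pos.ne'
        field_simp
      calc ∫ ω in A, L i T T ω * (B (T + δ i) ω)⁻¹ ∂Q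
          = c2 * ∫ ω in A, (B (T + δ i) ω * c2)⁻¹ * L i T T ω ∂Q := by
            rw [← integral_const_mul]
            exact setIntegral_congr_ae hA0 (ae_of_all _ fun ω _ => hptw _ ω)
        _ = c2 * ∫ ω in A, L i T T ω ∂ν := by rw [h2]
        _ = c2 * ∫ ω in A, L i t T ω ∂ν := by rw [h1]
        _ = c2 * ∫ ω in A, (B (T + δ i) ω * c2)⁻¹ * L i t T ω ∂Q := by rw [h2]
        _ = ∫ ω in A, L i t T ω * (B (T + δ i) ω)⁻¹ ∂Q := by
            rw [← integral_const_mul]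
            exact (setIntegral_congr_ae hA0 (ae_of_all _ fun ω _ => hptw _ ω)).symm
    · have h0T : L i T T =ᵐ[Q] 0 := by
        refine hlT.trans ?_
        rw [condExp_of_not_integrable hint]
      have h0t : L i t T =ᵐ[Q] 0 := by
        refine hlt.trans ?_
        rw [condExp_of_not_integrable hint]
      have hIT : Integrable (fun ω => L i T T ω * (B (T + δ i) ω)⁻¹) Q := by
        refine (integrable_zero Ω ℝ Q).congr ?_
        filter_upwards [h0T] with ω hω
        simp [hω]
      have hIt : Integrable (fun ω => L i t T ω * (B (T + δ i) ω)⁻¹) Q := by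
        refine (integrable_zero Ω ℝ Q).congr ?_
        filter_upwards [h0t] with ω hω
        simp [hω]
      refine ⟨hIT, hIt, fun A hA => ?_⟩
      have hA0 : MeasurableSet A := hm A hA
      have z1 : ∫ ω in A, L i T T ω * (B (T + δ i) ω)⁻¹ ∂Q = ∫ ω in A, (0:ℝ) ∂Q :=
        setIntegral_congr_ae hA0 (h0T.mono fun ω hω _ => by simp [hω])
      have z2 : ∫ ω in A, L i t T ω * (B (T + δ i) ω)⁻¹ ∂Q = ∫ ω in A, (0:ℝ) ∂Q :=
        setIntegral_congr_ae hA0 (h0t.mono fun ω hω _ => by simp [hω])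
      rw [z1, z2]
  exact main_aux Q ℱ t T (T + δ i) ht htT hTS B hBpos hBadapt P hPpos hPadapt hPTT hPInt
    hPMart (δ i) (L i t T) (L i T T) (hLadapt i t T) (hLadapt i T T) hIT hIt hms
end

section
/- Let (X,u,v) be an affine multi-curve model. Then X generates exponentially affine OIS bond prices and spreads: for all 0 ≤ t ≤ T ≤ 𝕋 and i = 1,…,m, B(t,T)/B_t = exp(A^0(t,T) + ⟨B^0(t,T), X_t⟩) and S^{δ_i}(t,T) = exp(A^i(t,T) + ⟨B^i(t,T), X_t⟩), where A^0(t,T) = v_0(T) + φ(T−t, u_0(T)), B^0(t,T) = ψ(T−t, u_0(T)), A^i(t,T) = v_i(T) + φ(T−t, u_i(T)+u_0(T)) − φ(T−t, u_0(T)), and B^i(t,T) = ψ(T−t, u_i(T)+u_0(T)) − ψ(T−t, u_0(T)), with φ and ψ the characteristic exponents of X. -/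
open MeasureTheory RealInnerProductSpace
open scoped ENNReal NNReal

lemma integrable_mul_of_integrable_mul_condexp
    {Ω : Type*} {m m0 : MeasurableSpace Ω} (hm : m ≤ m0) {μ : Measure Ω} [IsFiniteMeasure μ]
    {k G : Ω → ℝ} (hk : StronglyMeasurable[m] k) (hk0 : 0 ≤ k)
    (hG : Integrable G μ) (hG0 : 0 ≤ G)
    (hkE : Integrable (fun ω => k ω * (μ[G|m]) ω) μ) :
    Integrable (fun ω => k ω * G ω) μ := by
  have hkm0 : StronglyMeasurable k := hk.mono hm
  set kn : ℕ → Ω → ℝ := fun n ω => min (k ω) n with hkn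
  have hknm : ∀ n, StronglyMeasurable[m] (kn n) := fun n =>
    (continuous_id.min continuous_const).comp_stronglyMeasurable hk
  have hkn0 : ∀ n ω, 0 ≤ kn n ω := fun n ω => le_min (hk0 ω) (Nat.cast_nonneg n)
  have hknbd : ∀ n ω, ‖kn n ω‖ ≤ (n : ℝ) := fun n ω => by
    rw [Real.norm_eq_abs, abs_of_nonneg (hkn0 n ω)]; exact min_le_right _ _
  have hknG_int : ∀ n, Integrable (fun ω => kn n ω * G ω) μ := fun n =>
    hG.bdd_mul ((hknm n).mono hm).aestronglyMeasurable (Filter.Eventually.of_forall (hknbd n))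
  have hEnn : 0 ≤ᵐ[μ] μ[G|m] := condExp_nonneg (Filter.Eventually.of_forall hG0)
  -- the uniform bound
  set M : ℝ := ∫ ω, k ω * (μ[G|m]) ω ∂μ with hM
  have hbd : ∀ n, ∫ ω, kn n ω * G ω ∂μ ≤ M := by
    intro n
    have h1 : μ[fun ω => kn n ω * G ω|m] =ᵐ[μ] fun ω => kn n ω * (μ[G|m]) ω :=
      condExp_mul_of_stronglyMeasurable_left (hknm n) (hknG_int n) hG
    have h2 : ∫ ω, kn n ω * G ω ∂μ = ∫ ω, (μ[fun ω => kn n ω * G ω|m]) ω ∂μ :=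
      (integral_condExp hm).symm
    have hknE : Integrable (fun ω => kn n ω * (μ[G|m]) ω) μ :=
      integrable_condExp.bdd_mul ((hknm n).mono hm).aestronglyMeasurable (Filter.Eventually.of_forall (hknbd n))
    rw [h2, integral_congr_ae h1]
    refine integral_mono_ae hknE hkE ?_
    filter_upwards [hEnn] with ω hE
    exact mul_le_mul_of_nonneg_right (min_le_left _ _) hE
  have hmeas : AEStronglyMeasurable (fun ω => k ω * G ω) μ :=
    hkm0.aestronglyMeasurable.mul hG.1
  refine ⟨hmeas, ?_⟩
  rw [hasFiniteIntegral_iff_ofReal (Filter.Eventually.of_forall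
    (fun ω => mul_nonneg (hk0 ω) (hG0 ω)))]
  have key : (fun ω => ENNReal.ofReal (k ω * G ω))
      = fun ω => ⨆ n : ℕ, ENNReal.ofReal (kn n ω * G ω) := by
    funext ω
    refine le_antisymm ?_ (iSup_le fun n => ENNReal.ofReal_le_ofReal
      (mul_le_mul_of_nonneg_right (min_le_left _ _) (hG0 ω)))
    have : kn ⌈k ω⌉₊ ω = k ω := min_eq_left (Nat.le_ceil _)
    exact le_iSup_of_le ⌈k ω⌉₊ (by rw [this])
  have haemeas : ∀ n : ℕ, AEMeasurable (fun ω => ENNReal.ofReal (kn n ω * G ω)) μ := fun n =>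
    ((((hknm n).mono hm).measurable.aemeasurable).mul hG.1.aemeasurable).ennreal_ofReal
  have hmono : ∀ᵐ ω ∂μ, Monotone fun n : ℕ => ENNReal.ofReal (kn n ω * G ω) := by
    refine Filter.Eventually.of_forall fun ω a b hab => ?_
    exact ENNReal.ofReal_le_ofReal (mul_le_mul_of_nonneg_right
      (min_le_min le_rfl (Nat.cast_le.2 hab)) (hG0 ω))
  calc ∫⁻ ω, ENNReal.ofReal (k ω * G ω) ∂μ
      = ∫⁻ ω, ⨆ n : ℕ, ENNReal.ofReal (kn n ω * G ω) ∂μ := by rw [key]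
    _ = ⨆ n : ℕ, ∫⁻ ω, ENNReal.ofReal (kn n ω * G ω) ∂μ := lintegral_iSup' haemeas hmono
    _ ≤ ENNReal.ofReal M := by
        refine iSup_le fun n => ?_
        rw [← ofReal_integral_eq_lintegral_ofReal (hknG_int n)
          (Filter.Eventually.of_forall fun ω => mul_nonneg (hkn0 n ω) (hG0 ω))]
        exact ENNReal.ofReal_le_ofReal (hbd n)
    _ < ⊤ := ENNReal.ofReal_lt_top

/-- Let `(X,u,v)` be an affine multi-curve model.  Then `X` generates
exponentially affine OIS bond prices and spreads:
`B(t,T)/B_t = exp(A^0(t,T) + ⟨B^0(t,T),X_t⟩)` and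
`S^{δ i}(t,T) = exp(A^i(t,T) + ⟨B^i(t,T),X_t⟩)`, where
`A^0(t,T) = v_0(T) + φ(T-t,u_0(T))`, `B^0(t,T) = ψ(T-t,u_0(T))`,
`A^i(t,T) = v_i(T) + φ(T-t,u_i(T)+u_0(T)) - φ(T-t,u_0(T))` and
`B^i(t,T) = ψ(T-t,u_i(T)+u_0(T)) - ψ(T-t,u_0(T))`, with `φ, ψ` the characteristic exponents
of the affine process `X`. -/
theorem stmt_4
    {V : Type*} [NormedAddCommGroup V] [InnerProductSpace ℝ V] [FiniteDimensional ℝ V]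
    [MeasurableSpace V] [BorelSpace V]
    {Ω : Type*} {m0 : MeasurableSpace Ω} (Q : Measure Ω) [IsProbabilityMeasure Q]
    (𝕋 : ℝ) (ℱ : Filtration ℝ m0)
    (m : ℕ)
    -- the driving affine process `X`, adapted, with characteristic exponents `φ, ψ`:
    -- for every exponent `ζ ∈ 𝔘_T`, `E[e^{⟨ζ,X_T⟩} | F_t] = e^{φ(T-t,ζ) + ⟨ψ(T-t,ζ),X_t⟩}`
    (X : ℝ → Ω → V)
    (hXadapt : ∀ t, StronglyMeasurable[ℱ t] (X t))
    (φ : ℝ → V → ℝ) (ψ : ℝ → V → V)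
    (haff : ∀ (ζ : V) (t T : ℝ), 0 ≤ t → t ≤ T → T ≤ 𝕋 →
      (∀ s, s ∈ Set.Icc 0 T → Integrable (fun ω => Real.exp ⟪ζ, X s ω⟫) Q) →
      Q[fun ω => Real.exp ⟪ζ, X T ω⟫ | ℱ t] =ᵐ[Q]
        fun ω => Real.exp (φ (T - t) ζ + ⟪ψ (T - t) ζ, X t ω⟫))
    -- the model functions `u = (u_0, u_1, …, u_m)` and `v = (v_0, v_1, …, v_m)`, with the
    -- admissibility conditions `u_0(t) ∈ 𝔘_t` and `u_i(t) + u_0(t) ∈ 𝔘_t`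
    (u0 : ℝ → V) (u : Fin m → ℝ → V) (v0 : ℝ → ℝ) (v : Fin m → ℝ → ℝ)
    (hu0 : ∀ t, t ∈ Set.Icc 0 𝕋 → ∀ s, s ∈ Set.Icc 0 t →
      Integrable (fun ω => Real.exp ⟪u0 t, X s ω⟫) Q)
    (hu : ∀ (i : Fin m) t, t ∈ Set.Icc 0 𝕋 → ∀ s, s ∈ Set.Icc 0 t →
      Integrable (fun ω => Real.exp ⟪u i t + u0 t, X s ω⟫) Q)
    -- the numéraire: `log B_t = -v_0(t) - ⟨u_0(t), X_t⟩`
    (B : ℝ → Ω → ℝ)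
    (hB : ∀ t, t ∈ Set.Icc 0 𝕋 → ∀ ω, B t ω = Real.exp (-(v0 t) - ⟪u0 t, X t ω⟫))
    -- the spot multiplicative spreads: `log S^{δ i}(t,t) = v_i(t) + ⟨u_i(t), X_t⟩`
    (S : Fin m → ℝ → ℝ → Ω → ℝ)
    (hS : ∀ (i : Fin m) t, t ∈ Set.Icc 0 𝕋 → ∀ ω,
      S i t t ω = Real.exp (v i t + ⟪u i t, X t ω⟫))
    -- OIS bond prices: `B(t,T) = B_t E[1/B_T | F_t]`
    (P : ℝ → ℝ → Ω → ℝ)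
    (hbond : ∀ t T, 0 ≤ t → t ≤ T → T ≤ 𝕋 →
      P t T =ᵐ[Q] fun ω => B t ω * (Q[fun ω' => (B T ω')⁻¹ | ℱ t]) ω)
    -- forward spreads: `S^{δ i}(t,T) = E^{Q^T}[S^{δ i}(T,T) | F_t]` under the `T`-forward
    -- measure `dQ^T/dQ = 1/(B_T B(0,T))`
    (hspread : ∀ (i : Fin m) t T, 0 ≤ t → t ≤ T → T ≤ 𝕋 →
      S i t T =ᵐ[Q]
        (Q.withDensity (fun ω =>
            ENNReal.ofReal ((B T ω * ∫ ω', (B T ω')⁻¹ ∂Q)⁻¹)))[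
          fun ω => S i T T ω | ℱ t])
    -- conclusion, for all `0 ≤ t ≤ T ≤ 𝕋` and `i = 1,…,m`:
    (t T : ℝ) (ht : 0 ≤ t) (htT : t ≤ T) (hT𝕋 : T ≤ 𝕋) :
    ((fun ω => P t T ω / B t ω) =ᵐ[Q]
      fun ω => Real.exp (v0 T + φ (T - t) (u0 T) + ⟪ψ (T - t) (u0 T), X t ω⟫)) ∧
    ∀ i : Fin m,
      S i t T =ᵐ[Q]
        fun ω => Real.exp (v i T + φ (T - t) (u i T + u0 T) - φ (T - t) (u0 T) +
          ⟪ψ (T - t) (u i T + u0 T) - ψ (T - t) (u0 T), X t ω⟫) := by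
  
  have hT : (0:ℝ) ≤ T := ht.trans htT
  have hTmem : T ∈ Set.Icc (0:ℝ) 𝕋 := ⟨hT, hT𝕋⟩
  have htmem : t ∈ Set.Icc (0:ℝ) 𝕋 := ⟨ht, htT.trans hT𝕋⟩
  have hmt : ℱ t ≤ m0 := ℱ.le t
  have hBinv : (fun ω => (B T ω)⁻¹) = fun ω => Real.exp (v0 T + ⟪u0 T, X T ω⟫) := by
    funext ω
    rw [hB T hTmem ω, show -(v0 T) - ⟪u0 T, X T ω⟫ = -(v0 T + ⟪u0 T, X T ω⟫) by ring,
      Real.exp_neg, inv_inv]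
  have hGint : Integrable (fun ω => Real.exp ⟪u0 T, X T ω⟫) Q :=
    hu0 T hTmem T ⟨hT, le_refl T⟩
  have hG0cond : Q[fun ω => Real.exp ⟪u0 T, X T ω⟫ | ℱ t] =ᵐ[Q]
      fun ω => Real.exp (φ (T - t) (u0 T) + ⟪ψ (T - t) (u0 T), X t ω⟫) :=
    haff (u0 T) t T ht htT hT𝕋 (fun s hs => hu0 T hTmem s hs)
  have hcond1 : Q[fun ω' => (B T ω')⁻¹ | ℱ t] =ᵐ[Q]
      fun ω => Real.exp (v0 T + φ (T - t) (u0 T) + ⟪ψ (T - t) (u0 T), X t ω⟫) := by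
    rw [hBinv]
    have heq : (fun ω => Real.exp (v0 T + ⟪u0 T, X T ω⟫))
        = Real.exp (v0 T) • fun ω => Real.exp ⟪u0 T, X T ω⟫ := by
      funext ω
      simp [Real.exp_add, smul_eq_mul]
    rw [heq]
    refine (condExp_smul (Real.exp (v0 T)) _ _).trans ?_
    filter_upwards [hG0cond] with ω hω
    simp only [Pi.smul_apply, smul_eq_mul, hω, ← Real.exp_add]
    ring_nf
  constructor
  · have hBt : ∀ ω, B t ω ≠ 0 := fun ω => by
      rw [hB t htmem ω]; exact (Real.exp_pos _).ne'
    filter_upwards [hbond t T ht htT hT𝕋, hcond1] with ω h1 h2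
    simp only [h1, h2, mul_div_cancel_left₀ _ (hBt ω)]
  · intro i
    have hsp := hspread i t T ht htT hT𝕋
    set a := u i T + u0 T with ha
    set φ1 := φ (T - t) a with hφ1
    set ψ1 := ψ (T - t) a with hψ1
    set φ0 := φ (T - t) (u0 T) with hφ0
    set ψ0 := ψ (T - t) (u0 T) with hψ0
    set G : Ω → ℝ := fun ω => Real.exp ⟪u0 T, X T ω⟫ with hG
    have hGa : Integrable (fun ω => Real.exp ⟪a, X T ω⟫) Q := hu i T hTmem T ⟨hT, le_refl T⟩
    have hacond : Q[fun ω => Real.exp ⟪a, X T ω⟫ | ℱ t] =ᵐ[Q]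
        fun ω => Real.exp (φ1 + ⟪ψ1, X t ω⟫) :=
      haff a t T ht htT hT𝕋 (fun s hs => hu i T hTmem s hs)
    set c := ∫ ω', (B T ω')⁻¹ ∂Q with hc
    have hcval : c = ∫ ω', Real.exp (v0 T + ⟪u0 T, X T ω'⟫) ∂Q := by rw [hc, hBinv]
    have hexpint : Integrable (fun ω => Real.exp (v0 T + ⟪u0 T, X T ω⟫)) Q := by
      simpa [Real.exp_add] using hGint.const_mul (Real.exp (v0 T))
    have hcpos : 0 < c := by
      rw [hcval, integral_pos_iff_support_of_nonneg (fun ω => (Real.exp_pos _).le) hexpint]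
      have hsupp : (Function.support fun ω => Real.exp (v0 T + ⟪u0 T, X T ω⟫)) = Set.univ := by
        ext ω; simp [Function.support, Real.exp_ne_zero]
      rw [hsupp]
      simp
    set D : Ω → ℝ := fun ω => (B T ω * c)⁻¹ with hDdef
    have hD : ∀ ω, D ω = Real.exp (v0 T + ⟪u0 T, X T ω⟫) * c⁻¹ := fun ω => by
      rw [hDdef]
      simp only [mul_inv]
      rw [congrFun hBinv ω]
    have hDpos : ∀ ω, 0 < D ω := fun ω => by
      rw [hD ω]; exact mul_pos (Real.exp_pos _) (inv_pos.2 hcpos)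
    have hXT : Measurable (X T) := ((hXadapt T).mono (ℱ.le T)).measurable
    have hXt : Measurable (X t) := ((hXadapt t).mono hmt).measurable
    have hBTmeas : Measurable (B T) := by
      have : B T = fun ω => Real.exp (-(v0 T) - ⟪u0 T, X T ω⟫) := funext (hB T hTmem)
      rw [this]
      exact Real.measurable_exp.comp (measurable_const.sub (measurable_const.inner hXT))
    have hDmeas : Measurable D := (hBTmeas.mul_const c).inv
    have hDint : Integrable D Q := by
      have : D = fun ω => Real.exp (v0 T + ⟪u0 T, X T ω⟫) * c⁻¹ := funext hD
      rw [this]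
      exact hexpint.mul_const _
    set dens : Ω → ℝ≥0∞ := fun ω => ENNReal.ofReal ((B T ω * c)⁻¹) with hdens
    set QT := Q.withDensity dens with hQT
    haveI hQTfin : IsFiniteMeasure QT := isFiniteMeasure_withDensity_ofReal hDint.2
    haveI : SigmaFinite (QT.trim hmt) := by infer_instance
    set Dnn : Ω → ℝ≥0 := fun ω => (D ω).toNNReal with hDnn
    have hDnnmeas : Measurable Dnn := hDmeas.real_toNNReal
    have hdens2 : dens = fun ω => ((Dnn ω : ℝ≥0) : ℝ≥0∞) := rfl
    have hDnncoe : ∀ ω, ((Dnn ω : ℝ≥0) : ℝ) = D ω := fun ω =>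
      Real.coe_toNNReal _ (hDpos ω).le
    have hfval : ∀ ω, S i T T ω = Real.exp (v i T + ⟪u i T, X T ω⟫) := hS i T hTmem
    -- integrability of the payoff under QT
    have hfQT : Integrable (fun ω => S i T T ω) QT := by
      rw [hQT, hdens2, integrable_withDensity_iff_integrable_smul hDnnmeas]
      have heq : (fun ω => (Dnn ω : ℝ≥0) • S i T T ω)
          = fun ω => (Real.exp (v i T + v0 T) * c⁻¹) * Real.exp ⟪a, X T ω⟫ := by
        funext ω
        rw [NNReal.smul_def, smul_eq_mul, hDnncoe ω, hD ω, hfval ω, ha]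
        simp only [inner_add_left, Real.exp_add]
        ring
      rw [heq]
      exact hGa.const_mul _
    -- the key multiplicand
    set k : Ω → ℝ := fun ω => Real.exp ⟪ψ1 - ψ0, X t ω⟫ with hk
    have hkSM : StronglyMeasurable[ℱ t] k :=
      (Real.continuous_exp.comp
        ((continuous_const : Continuous fun _ : V => ψ1 - ψ0).inner
          continuous_id)).comp_stronglyMeasurable (hXadapt t)
    have hE1int : Integrable (fun ω => Real.exp (φ1 + ⟪ψ1, X t ω⟫)) Q :=
      integrable_condExp.congr hacond
    have hkEint : Integrable (fun ω => k ω * (Q[G|ℱ t]) ω) Q := by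
      refine Integrable.congr (hE1int.const_mul (Real.exp (φ0 - φ1))) ?_
      filter_upwards [hG0cond] with ω hω
      rw [hω]
      simp only [hk]
      rw [← Real.exp_add, ← Real.exp_add]
      congr 1
      rw [inner_sub_left]
      ring
    have hkG_int : Integrable (fun ω => k ω * G ω) Q :=
      integrable_mul_of_integrable_mul_condexp hmt hkSM
        (fun ω => (Real.exp_pos _).le) hGint (fun ω => (Real.exp_pos _).le) hkEint
    have hmulcond : Q[fun ω => k ω * G ω|ℱ t] =ᵐ[Q] fun ω => k ω * (Q[G|ℱ t]) ω :=
      condExp_mul_of_stronglyMeasurable_left hkSM hkG_int hGint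
    -- the candidate conditional expectation
    set h : Ω → ℝ := fun ω => Real.exp (v i T + φ1 - φ0 + ⟪ψ1 - ψ0, X t ω⟫) with hh
    have hhSM : StronglyMeasurable[ℱ t] h :=
      (Real.continuous_exp.comp
        ((continuous_const : Continuous fun _ : V => v i T + φ1 - φ0).add
          ((continuous_const : Continuous fun _ : V => ψ1 - ψ0).inner
            continuous_id))).comp_stronglyMeasurable (hXadapt t)
    have hhD : ∀ ω, (Dnn ω : ℝ≥0) • h ω
        = (Real.exp (v i T + φ1 - φ0 + v0 T) * c⁻¹) * (k ω * G ω) := by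
      intro ω
      rw [NNReal.smul_def, smul_eq_mul, hDnncoe ω, hD ω]
      simp only [hh, hk, hG, Real.exp_add, Real.exp_sub]
      ring
    have hhQT : Integrable h QT := by
      rw [hQT, hdens2, integrable_withDensity_iff_integrable_smul hDnnmeas]
      refine Integrable.congr
        (hkG_int.const_mul (Real.exp (v i T + φ1 - φ0 + v0 T) * c⁻¹)) ?_
      exact Filter.Eventually.of_forall fun ω => (hhD ω).symm
    -- the set-integral identity
    have hseteq : ∀ s : Set Ω, MeasurableSet[ℱ t] s → QT s < ⊤ →
        ∫ x in s, h x ∂QT = ∫ x in s, S i T T x ∂QT := by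
      intro s hs _
      have hs' : MeasurableSet s := hmt s hs
      rw [hQT, hdens2,
        setIntegral_withDensity_eq_setIntegral_smul hDnnmeas h hs',
        setIntegral_withDensity_eq_setIntegral_smul hDnnmeas _ hs']
      calc ∫ x in s, (Dnn x : ℝ≥0) • h x ∂Q
          = ∫ x in s, (Real.exp (v i T + φ1 - φ0 + v0 T) * c⁻¹) * (k x * G x) ∂Q := by
            exact setIntegral_congr_ae hs' (Filter.Eventually.of_forall fun ω _ => hhD ω)
        _ = (Real.exp (v i T + φ1 - φ0 + v0 T) * c⁻¹) * ∫ x in s, k x * G x ∂Q := by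
            rw [integral_const_mul]
        _ = (Real.exp (v i T + φ1 - φ0 + v0 T) * c⁻¹)
            * ∫ x in s, (Q[fun ω => k ω * G ω|ℱ t]) x ∂Q := by
            rw [setIntegral_condExp hmt hkG_int hs]
        _ = (Real.exp (v i T + φ1 - φ0 + v0 T) * c⁻¹)
            * ∫ x in s, Real.exp (φ0 + ⟪ψ1, X t x⟫) ∂Q := by
            congr 1
            refine setIntegral_congr_ae hs' ?_
            filter_upwards [hmulcond, hG0cond] with ω h1 h2 _
            rw [h1, h2]
            simp only [hk]
            rw [← Real.exp_add]
            congr 1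
            rw [inner_sub_left]
            ring
        _ = Real.exp (v i T + φ1 - φ0 + v0 T) * c⁻¹
            * (Real.exp φ0 * ∫ x in s, Real.exp ⟪ψ1, X t x⟫ ∂Q) := by
            congr 1
            simp only [Real.exp_add, integral_const_mul]
        _ = ∫ x in s, (Dnn x : ℝ≥0) • S i T T x ∂Q := by
            have hptw : ∀ ω, (Dnn ω : ℝ≥0) • S i T T ω
                = (Real.exp (v i T + v0 T) * c⁻¹) * Real.exp ⟪a, X T ω⟫ := by
              intro ω
              rw [NNReal.smul_def, smul_eq_mul, hDnncoe ω, hD ω, hfval ω, ha]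
              simp only [inner_add_left, Real.exp_add]
              ring
            have hRHS : ∫ x in s, (Dnn x : ℝ≥0) • S i T T x ∂Q
                = Real.exp (v i T + v0 T) * c⁻¹
                  * (Real.exp φ1 * ∫ x in s, Real.exp ⟪ψ1, X t x⟫ ∂Q) := by
              rw [setIntegral_congr_ae hs' (Filter.Eventually.of_forall fun ω _ => hptw ω),
                integral_const_mul, ← setIntegral_condExp hmt hGa hs,
                setIntegral_congr_ae hs' (hacond.mono fun ω h1 _ => h1)]
              simp only [Real.exp_add, integral_const_mul]
            rw [hRHS]
            have hconst : Real.exp (v i T + φ1 - φ0 + v0 T) * Real.exp φ0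
                = Real.exp (v i T + v0 T) * Real.exp φ1 := by
              rw [← Real.exp_add, ← Real.exp_add]
              congr 1
              ring
            linear_combination (c⁻¹ * ∫ x in s, Real.exp ⟪ψ1, X t x⟫ ∂Q) * hconst
    have hmain : h =ᵐ[QT] QT[fun ω => S i T T ω | ℱ t] :=
      ae_eq_condExp_of_forall_setIntegral_eq hmt hfQT
        (fun s _ _ => hhQT.integrableOn) hseteq hhSM.aestronglyMeasurable
    have hdensmeas : Measurable dens := hDmeas.ennreal_ofReal
    have h2 : ∀ᵐ ω ∂Q, dens ω ≠ 0 → h ω = (QT[fun ω => S i T T ω | ℱ t]) ω := by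
      have := hmain
      rw [hQT] at this
      exact (ae_withDensity_iff hdensmeas).1 this
    have h3 : QT[fun ω => S i T T ω | ℱ t] =ᵐ[Q] h := by
      filter_upwards [h2] with ω hω
      exact (hω (ENNReal.ofReal_pos.2 (hDpos ω)).ne').symm
    exact hsp.trans h3
end

section
/- Let X be an affine process and suppose X generates exponentially affine OIS bond prices and spreads, i.e., B(t,T)/B_t = exp(A^0(t,T) + ⟨B^0(t,T), X_t⟩) and S^{δ_i}(t,T) = exp(A^i(t,T) + ⟨B^i(t,T), X_t⟩) for all 0 ≤ t ≤ T ≤ 𝕋 and i = 1,…,m, for some functions A^i : [0,𝕋]² → ℝ and B^i : [0,𝕋]² → V. Then (X,u,v) is an affine multi-curve model with v_0(t) = A^0(t,t), u_0(t) = B^0(t,t), v_i(t) = A^i(t,t), u_i(t) = B^i(t,t): namely, log B_t = −A^0(t,t) − ⟨B^0(t,t), X_t⟩ and log S^{δ_i}(t,t) = A^i(t,t) + ⟨B^i(t,t), X_t⟩ for all t, and moreover the admissibility conditions hold: E[e^{⟨B^0(T,T), X_T⟩}] < ∞ and E[e^{⟨B^i(T,T)+B^0(T,T), X_T⟩}]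 < ∞ for all T ∈ [0,𝕋] and i = 1,…,m (i.e., u_0(T) ∈ 𝔘_T and u_i(T)+u_0(T) ∈ 𝔘_T). -/
open MeasureTheory RealInnerProductSpace

/-- Let `X` be an affine process and suppose `X` generates exponentially
affine OIS bond prices and spreads, i.e. `B(t,T)/B_t = exp(A^0(t,T) + ⟨B^0(t,T),X_t⟩)` and
`S^{δ i}(t,T) = exp(A^i(t,T) + ⟨B^i(t,T),X_t⟩)` for all `0 ≤ t ≤ T ≤ 𝕋`.  Then `(X,u,v)` is an
affine multi-curve model with `v_0(t) = A^0(t,t)`, `u_0(t) = B^0(t,t)`, `v_i(t) = A^i(t,t)`,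
`u_i(t) = B^i(t,t)`: namely `log B_t = -A^0(t,t) - ⟨B^0(t,t),X_t⟩` and
`log S^{δ i}(t,t) = A^i(t,t) + ⟨B^i(t,t),X_t⟩`, and the admissibility (exponential moment)
conditions `E[e^{⟨B^0(T,T),X_T⟩}] < ∞` and `E[e^{⟨B^i(T,T)+B^0(T,T),X_T⟩}] < ∞` hold. -/
theorem stmt_5
    {V : Type*} [NormedAddCommGroup V] [InnerProductSpace ℝ V] [FiniteDimensional ℝ V]
    [MeasurableSpace V] [BorelSpace V]
    {Ω : Type*} {m0 : MeasurableSpace Ω} (Q : Measure Ω) [IsProbabilityMeasure Q]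
    (𝕋 : ℝ) (ℱ : Filtration ℝ m0)
    (m : ℕ)
    -- the driving (affine) process `X`, adapted, with characteristic exponents `φ, ψ`
    (X : ℝ → Ω → V)
    (hXadapt : ∀ t, StronglyMeasurable[ℱ t] (X t))
    (φ : ℝ → V → ℝ) (ψ : ℝ → V → V)
    (haff : ∀ (ζ : V) (t T : ℝ), 0 ≤ t → t ≤ T → T ≤ 𝕋 →
      (∀ s, s ∈ Set.Icc 0 T → Integrable (fun ω => Real.exp ⟪ζ, X s ω⟫) Q) →
      Q[fun ω => Real.exp ⟪ζ, X T ω⟫ | ℱ t] =ᵐ[Q]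
        fun ω => Real.exp (φ (T - t) ζ + ⟪ψ (T - t) ζ, X t ω⟫))
    -- the numéraire: strictly positive, adapted, `B_0 = 1`
    (B : ℝ → Ω → ℝ)
    (hBpos : ∀ t ω, 0 < B t ω)
    (hB0 : ∀ ω, B 0 ω = 1)
    (hBadapt : ∀ t, StronglyMeasurable[ℱ t] (B t))
    -- OIS bond prices: `B(T,T) = 1`, `B(t,T) = B_t E[1/B_T | F_t]` (with `1/B_T` integrable)
    (P : ℝ → ℝ → Ω → ℝ)
    (hPTT : ∀ T ω, P T T ω = 1)
    (hBint : ∀ T, T ∈ Set.Icc 0 𝕋 → Integrable (fun ω => (B T ω)⁻¹) Q)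
    (hbond : ∀ t T, 0 ≤ t → t ≤ T → T ≤ 𝕋 →
      P t T =ᵐ[Q] fun ω => B t ω * (Q[fun ω' => (B T ω')⁻¹ | ℱ t]) ω)
    -- spreads: positive, with `S^{δ i}(T,T)/B_T` integrable, satisfying the
    -- `T`-forward-measure martingale property, with `dQ^T/dQ = 1/(B_T B(0,T))`
    (S : Fin m → ℝ → ℝ → Ω → ℝ)
    (hSpos : ∀ i t T ω, 0 < S i t T ω)
    (hSint : ∀ (i : Fin m) T, T ∈ Set.Icc 0 𝕋 →
      Integrable (fun ω => S i T T ω / B T ω) Q)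
    (hspread : ∀ (i : Fin m) t T, 0 ≤ t → t ≤ T → T ≤ 𝕋 →
      S i t T =ᵐ[Q]
        (Q.withDensity (fun ω =>
            ENNReal.ofReal ((B T ω * ∫ ω', (B T ω')⁻¹ ∂Q)⁻¹)))[
          fun ω => S i T T ω | ℱ t])
    -- hypothesis: exponentially affine OIS bond prices and spreads
    (A0 : ℝ → ℝ → ℝ) (B0 : ℝ → ℝ → V)
    (Ai : Fin m → ℝ → ℝ → ℝ) (Bi : Fin m → ℝ → ℝ → V)
    (hPrep : ∀ t T, 0 ≤ t → t ≤ T → T ≤ 𝕋 → ∀ ω,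
      P t T ω / B t ω = Real.exp (A0 t T + ⟪B0 t T, X t ω⟫))
    (hSrep : ∀ (i : Fin m) t T, 0 ≤ t → t ≤ T → T ≤ 𝕋 → ∀ ω,
      S i t T ω = Real.exp (Ai i t T + ⟪Bi i t T, X t ω⟫)) :
    -- conclusion: `(X,u,v)` is an affine multi-curve model with
    -- `v_0(t) = A^0(t,t)`, `u_0(t) = B^0(t,t)`, `v_i(t) = A^i(t,t)`, `u_i(t) = B^i(t,t)`
    (∀ t, t ∈ Set.Icc 0 𝕋 → ∀ ω,
      Real.log (B t ω) = -(A0 t t) - ⟪B0 t t, X t ω⟫) ∧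
    (∀ (i : Fin m) t, t ∈ Set.Icc 0 𝕋 → ∀ ω,
      Real.log (S i t t ω) = Ai i t t + ⟪Bi i t t, X t ω⟫) ∧
    (∀ T, T ∈ Set.Icc 0 𝕋 →
      Integrable (fun ω => Real.exp ⟪B0 T T, X T ω⟫) Q) ∧
    (∀ (i : Fin m) T, T ∈ Set.Icc 0 𝕋 →
      Integrable (fun ω => Real.exp ⟪Bi i T T + B0 T T, X T ω⟫) Q) := by
  have hBinv : ∀ t, t ∈ Set.Icc 0 𝕋 → ∀ ω : Ω,
      (B t ω)⁻¹ = Real.exp (A0 t t + ⟪B0 t t, X t ω⟫) := by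
    intro t ht ω
    have := hPrep t t ht.1 le_rfl ht.2 ω
    rwa [hPTT, one_div] at this
  refine ⟨?_, ?_, ?_, ?_⟩
  · intro t ht ω
    have h := hBinv t ht ω
    have hB : B t ω = Real.exp (-(A0 t t + ⟪B0 t t, X t ω⟫)) := by
      rw [Real.exp_neg, ← h, inv_inv]
    rw [hB, Real.log_exp]; ring
  · intro i t ht ω
    rw [hSrep i t t ht.1 le_rfl ht.2 ω, Real.log_exp]
  · intro T hT
    have : (fun ω => Real.exp ⟪B0 T T, X T ω⟫)
        = fun ω => Real.exp (-(A0 T T)) * (B T ω)⁻¹ := by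
      funext ω
      rw [hBinv T hT ω, ← Real.exp_add]
      ring_nf
    rw [this]
    exact (hBint T hT).const_mul _
  · intro i T hT
    have : (fun ω => Real.exp ⟪Bi i T T + B0 T T, X T ω⟫)
        = fun ω => Real.exp (-(Ai i T T) + -(A0 T T)) * (S i T T ω / B T ω) := by
      funext ω
      rw [div_eq_mul_inv, hSrep i T T hT.1 le_rfl hT.2 ω, hBinv T hT ω,
        ← Real.exp_add, ← Real.exp_add, inner_add_left]
      ring_nf
    rw [this]
    exact ((hSint i T hT)).const_mul _
end

section
/- Let (X,u,v) be an affine multi-curve model where X = (X^0, Z) takes values in D = D_{X^0} × C_Z with C_Z a closed convex cone. Suppose v_i(t) ≥ 0 for all t ∈ [0,𝕋] and i = 1,…,m, and each u_i has the form u_i = (0, w_i) with w_i : [0,𝕋] → C_Z^*, where C_Z^* is the dual cone of C_Z. Then S^{δ_i}(t,T) ≥ 1 almost surely for all 0 ≤ t ≤ T ≤ 𝕋 and i = 1,…,m. -/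
open MeasureTheory RealInnerProductSpace

/-- Let `(X,u,v)` be an affine multi-curve model where `X = (X⁰, Z)` takes
values in `D = D_{X⁰} × C_Z` with `C_Z` a closed convex cone.  Suppose `v_i(t) ≥ 0` for all
`t ∈ [0,𝕋]` and `i = 1,…,m`, and each `u_i` has the form `u_i = (0, w_i)` with
`w_i : [0,𝕋] → C_Z^*`, the dual cone of `C_Z`.  Then `S^{δ i}(t,T) ≥ 1` almost surely for all
`0 ≤ t ≤ T ≤ 𝕋` and `i = 1,…,m`.  (Since `u_i = (0,w_i)`, the spot spread is
`S^{δ i}(t,t) = exp(v_i(t) + ⟨w_i(t), Z_t⟩)` and the forward spread is its conditional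
expectation under the `T`-forward measure `Q^T`, a probability measure equivalent to `Q`.) -/
theorem stmt_6
    {W : Type*} [NormedAddCommGroup W] [InnerProductSpace ℝ W]
    {Ω : Type*} {m0 : MeasurableSpace Ω} (Q : Measure Ω) [IsProbabilityMeasure Q]
    (𝕋 : ℝ) (ℱ : Filtration ℝ m0)
    (m : ℕ)
    -- the closed convex cone `C_Z ⊆ W`
    (C : Set W) (hCclosed : IsClosed C) (hCconv : Convex ℝ C)
    (hCcone : ∀ z ∈ C, ∀ c : ℝ, 0 ≤ c → c • z ∈ C)
    -- the cone-valued component `Z` of the driving process `X = (X⁰, Z)`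
    (Z : ℝ → Ω → W) (hZ : ∀ t, t ∈ Set.Icc 0 𝕋 → ∀ ω, Z t ω ∈ C)
    -- the model functions: `v_i ≥ 0` and `w_i` take values in the dual cone `C_Z^*`
    (v : Fin m → ℝ → ℝ) (w : Fin m → ℝ → W)
    (hv : ∀ (i : Fin m) t, t ∈ Set.Icc 0 𝕋 → 0 ≤ v i t)
    (hw : ∀ (i : Fin m) t, t ∈ Set.Icc 0 𝕋 → ∀ z ∈ C, 0 ≤ ⟪w i t, z⟫)
    -- the `T`-forward measures: probability measures equivalent to `Q`
    (QT : ℝ → Measure Ω) [∀ T, IsProbabilityMeasure (QT T)]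
    (hQT : ∀ T, T ∈ Set.Icc 0 𝕋 → QT T ≪ Q ∧ Q ≪ QT T)
    -- the spreads: `S^{δ i}(T,T) = exp(v_i(T) + ⟨w_i(T), Z_T⟩)` is `Q^T`-integrable and
    -- `S^{δ i}(t,T) = E^{Q^T}[S^{δ i}(T,T) | F_t]`
    (S : Fin m → ℝ → ℝ → Ω → ℝ)
    (hSint : ∀ (i : Fin m) T, T ∈ Set.Icc 0 𝕋 →
      Integrable (fun ω => Real.exp (v i T + ⟪w i T, Z T ω⟫)) (QT T))
    (hS : ∀ (i : Fin m) t T, 0 ≤ t → t ≤ T → T ≤ 𝕋 →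
      S i t T =ᵐ[QT T]
        (QT T)[fun ω => Real.exp (v i T + ⟪w i T, Z T ω⟫) | ℱ t])
    -- conclusion:
    (i : Fin m) (t T : ℝ) (ht : 0 ≤ t) (htT : t ≤ T) (hT𝕋 : T ≤ 𝕋) :
    ∀ᵐ ω ∂Q, 1 ≤ S i t T ω := by
  have hT : T ∈ Set.Icc 0 𝕋 := ⟨le_trans ht htT, hT𝕋⟩
  have hge : ∀ ω, (1 : ℝ) ≤ Real.exp (v i T + ⟪w i T, Z T ω⟫) := fun ω =>
    Real.one_le_exp (add_nonneg (hv i T hT) (hw i T hT _ (hZ T hT ω)))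
  have hcond : ∀ᵐ ω ∂(QT T),
      (1 : ℝ) ≤ ((QT T)[fun ω => Real.exp (v i T + ⟪w i T, Z T ω⟫) | ℱ t]) ω := by
    have h1 := condExp_const (μ := QT T) (ℱ.le t) (1 : ℝ)
    have hmono := condExp_mono (μ := QT T) (m := ℱ t)
      (integrable_const (1 : ℝ)) (hSint i T hT)
      (Filter.Eventually.of_forall hge)
    filter_upwards [hmono] with ω h2
    simpa [h1] using h2
  have hQTS : ∀ᵐ ω ∂(QT T), 1 ≤ S i t T ω := by
    filter_upwards [hS i t T ht htT hT𝕋, hcond] with ω hSω hcω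
    rw [hSω]; exact hcω
  exact (hQT T hT).2 hQTS
end

section
/- Let (X,u,v) be an affine multi-curve model where X = (X^0, Z) takes values in D = D_{X^0} × C_Z with C_Z a closed convex cone, v_i(t) ≥ 0 and u_i = (0, w_i) with w_i : [0,𝕋] → C_Z^* for i = 1,…,m. If in addition v_1(t) ≤ v_2(t) ≤ … ≤ v_m(t) and w_2(t) − w_1(t) ∈ C_Z^*, …, w_m(t) − w_{m−1}(t) ∈ C_Z^* for all t ∈ [0,𝕋], then the spreads are ordered with respect to the tenor: S^{δ_1}(t,T) ≤ S^{δ_2}(t,T) ≤ … ≤ S^{δ_m}(t,T) almost surely for all 0 ≤ t ≤ T ≤ 𝕋. -/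
open MeasureTheory RealInnerProductSpace

/-- Let `(X,u,v)` be an affine multi-curve model where `X = (X⁰, Z)` takes
values in `D = D_{X⁰} × C_Z` with `C_Z` a closed convex cone, `v_i(t) ≥ 0` and `u_i = (0,w_i)`
with `w_i : [0,𝕋] → C_Z^*` for `i = 1,…,m`.  If in addition
`v_1(t) ≤ v_2(t) ≤ … ≤ v_m(t)` and `w_{k+1}(t) - w_k(t) ∈ C_Z^*` for all `t ∈ [0,𝕋]`, then the
spreads are ordered with respect to the tenor:
`S^{δ_1}(t,T) ≤ S^{δ_2}(t,T) ≤ … ≤ S^{δ_m}(t,T)` almost surely for all `0 ≤ t ≤ T ≤ 𝕋`. -/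
theorem stmt_7
    {W : Type*} [NormedAddCommGroup W] [InnerProductSpace ℝ W]
    {Ω : Type*} {m0 : MeasurableSpace Ω} (Q : Measure Ω) [IsProbabilityMeasure Q]
    (𝕋 : ℝ) (ℱ : Filtration ℝ m0)
    (m : ℕ)
    -- the closed convex cone `C_Z ⊆ W`
    (C : Set W) (hCclosed : IsClosed C) (hCconv : Convex ℝ C)
    (hCcone : ∀ z ∈ C, ∀ c : ℝ, 0 ≤ c → c • z ∈ C)
    -- the cone-valued component `Z` of the driving process `X = (X⁰, Z)`
    (Z : ℝ → Ω → W) (hZ : ∀ t, t ∈ Set.Icc 0 𝕋 → ∀ ω, Z t ω ∈ C)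
    -- the model functions: `v_i ≥ 0` and `w_i` take values in the dual cone `C_Z^*`
    (v : Fin m → ℝ → ℝ) (w : Fin m → ℝ → W)
    (hv : ∀ (i : Fin m) t, t ∈ Set.Icc 0 𝕋 → 0 ≤ v i t)
    (hw : ∀ (i : Fin m) t, t ∈ Set.Icc 0 𝕋 → ∀ z ∈ C, 0 ≤ ⟪w i t, z⟫)
    -- ordering of the model functions: `v_1(t) ≤ … ≤ v_m(t)` and the consecutive differences
    -- `w_{k+1}(t) - w_k(t)` lie in the dual cone `C_Z^*`
    (hvord : ∀ (k : ℕ) (hk : k + 1 < m), ∀ t, t ∈ Set.Icc 0 𝕋 →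
      v ⟨k, Nat.lt_of_succ_lt hk⟩ t ≤ v ⟨k + 1, hk⟩ t)
    (hword : ∀ (k : ℕ) (hk : k + 1 < m), ∀ t, t ∈ Set.Icc 0 𝕋 → ∀ z ∈ C,
      0 ≤ ⟪w ⟨k + 1, hk⟩ t - w ⟨k, Nat.lt_of_succ_lt hk⟩ t, z⟫)
    -- the `T`-forward measures: probability measures equivalent to `Q`
    (QT : ℝ → Measure Ω) [∀ T, IsProbabilityMeasure (QT T)]
    (hQT : ∀ T, T ∈ Set.Icc 0 𝕋 → QT T ≪ Q ∧ Q ≪ QT T)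
    -- the spreads: `S^{δ i}(T,T) = exp(v_i(T) + ⟨w_i(T), Z_T⟩)` is `Q^T`-integrable and
    -- `S^{δ i}(t,T) = E^{Q^T}[S^{δ i}(T,T) | F_t]`
    (S : Fin m → ℝ → ℝ → Ω → ℝ)
    (hSint : ∀ (i : Fin m) T, T ∈ Set.Icc 0 𝕋 →
      Integrable (fun ω => Real.exp (v i T + ⟪w i T, Z T ω⟫)) (QT T))
    (hS : ∀ (i : Fin m) t T, 0 ≤ t → t ≤ T → T ≤ 𝕋 →
      S i t T =ᵐ[QT T]
        (QT T)[fun ω => Real.exp (v i T + ⟪w i T, Z T ω⟫) | ℱ t])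
    -- conclusion: the spreads are ordered with respect to the tenor
    (i j : Fin m) (hij : i ≤ j)
    (t T : ℝ) (ht : 0 ≤ t) (htT : t ≤ T) (hT𝕋 : T ≤ 𝕋) :
    ∀ᵐ ω ∂Q, S i t T ω ≤ S j t T ω := by
  have hT : T ∈ Set.Icc 0 𝕋 := ⟨le_trans ht htT, hT𝕋⟩
  -- monotonicity along the index
  have key : ∀ (n : ℕ) (a b : Fin m), (b : ℕ) = (a : ℕ) + n →
      v a T ≤ v b T ∧ ∀ z ∈ C, ⟪w a T, z⟫ ≤ ⟪w b T, z⟫ := by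
    intro n
    induction n with
    | zero =>
      intro a b h
      have : a = b := Fin.ext (by omega)
      subst this
      exact ⟨le_refl _, fun z _ => le_refl _⟩
    | succ n ih =>
      intro a b h
      have hk : (a : ℕ) + n + 1 < m := by have := b.isLt; omega
      set c : Fin m := ⟨(a : ℕ) + n, Nat.lt_of_succ_lt hk⟩ with hc
      have hb : b = ⟨(a : ℕ) + n + 1, hk⟩ := Fin.ext h
      obtain ⟨h1, h2⟩ := ih a c rfl
      constructor
      · refine le_trans h1 ?_
        rw [hb]; exact hvord ((a : ℕ) + n) hk T hT
      · intro z hz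
        refine le_trans (h2 z hz) ?_
        have := hword ((a : ℕ) + n) hk T hT z hz
        rw [inner_sub_left] at this
        rw [hb]; linarith
  obtain ⟨hv', hw'⟩ := key ((j : ℕ) - (i : ℕ)) i j (by omega)
  -- pointwise ordering of terminal spreads
  have hpt : (fun ω => Real.exp (v i T + ⟪w i T, Z T ω⟫))
      ≤ᵐ[QT T] (fun ω => Real.exp (v j T + ⟪w j T, Z T ω⟫)) := by
    refine Filter.Eventually.of_forall fun ω => ?_
    exact Real.exp_le_exp.2 (add_le_add hv' (hw' (Z T ω) (hZ T hT ω)))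
  have hce := condExp_mono (hSint i T hT) (hSint j T hT) hpt (m := ℱ t)
  have hSi := hS i t T ht htT hT𝕋
  have hSj := hS j t T ht htT hT𝕋
  have hQTle : ∀ᵐ ω ∂(QT T), S i t T ω ≤ S j t T ω := by
    filter_upwards [hSi, hSj, hce] with ω h1 h2 h3
    rw [h1, h2]; exact h3
  exact hQTle.filter_mono ((hQT T hT).2.ae_le)
end

section
/- An affine multi-curve model (X,u,v) achieves an exact fit to the initially observed term structures, i.e., B(0,T) = B^M(0,T) and S^{δ_i}(0,T) = S^{M,δ_i}(0,T) for all T ∈ [0,𝕋] and i = 1,…,m, if and only if v_0(t) = log B^M(0,t) − log B^0(0,t) and v_i(t) = log S^{M,δ_i}(0,t) − log S^{0,δ_i}(0,t) for all t ∈ [0,𝕋] and i = 1,…,m, where B^0(0,t) and S^{0,δ_i}(0,t) are the theoretical bond prices and spreads of the model (X,u,0) (all functions v_j set to zero). In particular B(0,t) = e^{v_0(t)} B^0(0,t) and S^{δ_i}(0,t) = e^{v_i(t)} S^{0,δ_i}(0,t), the latter because the density of the t-forward measure, e^{⟨u_0(t),X_t⟩}/E[e^{⟨u_0(t),X_t⟩}],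 is the same for the models (X,u,v) and (X,u,0). -/
open MeasureTheory RealInnerProductSpace

/-- An affine multi-curve model `(X,u,v)` achieves an exact fit to the
initially observed term structures, i.e. `B(0,T) = B^M(0,T)` and `S^{δ i}(0,T) = S^{M,δ i}(0,T)`
for all `T ∈ [0,𝕋]` and `i`, if and only if `v_0(t) = log B^M(0,t) - log B^0(0,t)` and
`v_i(t) = log S^{M,δ i}(0,t) - log S^{0,δ i}(0,t)`, where `B^0(0,t)` and `S^{0,δ i}(0,t)` are the
theoretical bond prices and spreads of the model `(X,u,0)`.  In particular
`B(0,t) = e^{v_0(t)} B^0(0,t)` and `S^{δ i}(0,t) = e^{v_i(t)} S^{0,δ i}(0,t)` (the latter because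
both models induce the same `t`-forward measure density `e^{⟨u_0(t),X_t⟩}/E[e^{⟨u_0(t),X_t⟩}]`).
Here `B(0,t) = E[1/B_t] = E[e^{v_0(t)+⟨u_0(t),X_t⟩}]`, and
`S^{δ i}(0,t) = E^{Q^t}[S^{δ i}(t,t)]` with `dQ^t/dQ = 1/(B_t B(0,t))`. -/
theorem stmt_8
    {V : Type*} [NormedAddCommGroup V] [InnerProductSpace ℝ V] [FiniteDimensional ℝ V]
    [MeasurableSpace V] [BorelSpace V]
    {Ω : Type*} {m0 : MeasurableSpace Ω} (Q : Measure Ω) [IsProbabilityMeasure Q]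
    (𝕋 : ℝ) (h𝕋 : 0 ≤ 𝕋) (m : ℕ)
    -- the driving affine process `X`
    (X : ℝ → Ω → V) (hXmeas : ∀ t, Measurable (X t))
    -- the model functions, with the admissibility conditions `u_0(t) ∈ 𝔘_t`,
    -- `u_i(t) + u_0(t) ∈ 𝔘_t` (exponential moments at time `t`)
    (u0 : ℝ → V) (u : Fin m → ℝ → V) (v0 : ℝ → ℝ) (v : Fin m → ℝ → ℝ)
    (hu0int : ∀ t, t ∈ Set.Icc 0 𝕋 →
      Integrable (fun ω => Real.exp ⟪u0 t, X t ω⟫) Q)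
    (huint : ∀ (i : Fin m) t, t ∈ Set.Icc 0 𝕋 →
      Integrable (fun ω => Real.exp ⟪u i t + u0 t, X t ω⟫) Q)
    -- the initially observed market term structures (positive)
    (BM : ℝ → ℝ) (SM : Fin m → ℝ → ℝ)
    (hBM : ∀ t, t ∈ Set.Icc 0 𝕋 → 0 < BM t)
    (hSM : ∀ (i : Fin m) t, t ∈ Set.Icc 0 𝕋 → 0 < SM i t)
    -- the time-0 bond prices and spreads of the model `(X,u,v)`:
    -- `B(0,t) = E[1/B_t]` with `1/B_t = e^{v_0(t)+⟨u_0(t),X_t⟩}`, and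
    -- `S^{δ i}(0,t) = E^{Q^t}[S^{δ i}(t,t)]` with `S^{δ i}(t,t) = e^{v_i(t)+⟨u_i(t),X_t⟩}`
    -- and `dQ^t/dQ = 1/(B_t B(0,t))`
    (Bobs : ℝ → ℝ) (Sobs : Fin m → ℝ → ℝ)
    (hBobs : ∀ t, Bobs t = ∫ ω, Real.exp (v0 t + ⟪u0 t, X t ω⟫) ∂Q)
    (hSobs : ∀ (i : Fin m) t, Sobs i t =
      ∫ ω, Real.exp (v i t + ⟪u i t, X t ω⟫) *
        (Real.exp (v0 t + ⟪u0 t, X t ω⟫) / Bobs t) ∂Q)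
    -- the corresponding theoretical quantities of the model `(X,u,0)`
    (B0obs : ℝ → ℝ) (S0obs : Fin m → ℝ → ℝ)
    (hB0obs : ∀ t, B0obs t = ∫ ω, Real.exp ⟪u0 t, X t ω⟫ ∂Q)
    (hS0obs : ∀ (i : Fin m) t, S0obs i t =
      ∫ ω, Real.exp ⟪u i t, X t ω⟫ *
        (Real.exp ⟪u0 t, X t ω⟫ / B0obs t) ∂Q) :
    -- conclusions: the "in particular" identities and the exact-fit characterization
    (∀ t, t ∈ Set.Icc 0 𝕋 → Bobs t = Real.exp (v0 t) * B0obs t) ∧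
    (∀ (i : Fin m) t, t ∈ Set.Icc 0 𝕋 → Sobs i t = Real.exp (v i t) * S0obs i t) ∧
    ((∀ T, T ∈ Set.Icc 0 𝕋 → Bobs T = BM T ∧ ∀ i : Fin m, Sobs i T = SM i T) ↔
      (∀ t, t ∈ Set.Icc 0 𝕋 →
        v0 t = Real.log (BM t) - Real.log (B0obs t) ∧
        ∀ i : Fin m, v i t = Real.log (SM i t) - Real.log (S0obs i t))) := by
 -- begin proof
  -- positivity of the theoretical bond prices
  have hB0pos : ∀ t, t ∈ Set.Icc 0 𝕋 → 0 < B0obs t := by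
    intro t ht
    rw [hB0obs t]
    exact integral_exp_pos (hu0int t ht)
  -- B = e^{v0} B^0
  have hB : ∀ t, t ∈ Set.Icc 0 𝕋 → Bobs t = Real.exp (v0 t) * B0obs t := by
    intro t ht
    rw [hBobs t, hB0obs t, ← integral_const_mul]
    congr 1; ext ω; rw [Real.exp_add]
  -- S = e^{v i} S^0
  have hS : ∀ (i : Fin m) t, t ∈ Set.Icc 0 𝕋 → Sobs i t = Real.exp (v i t) * S0obs i t := by
    intro i t ht
    rw [hSobs i t, hS0obs i t, ← integral_const_mul]
    congr 1; ext ω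
    have h0 : Real.exp (v0 t) ≠ 0 := (Real.exp_pos _).ne'
    rw [hB t ht, Real.exp_add (v i t), Real.exp_add (v0 t), mul_div_mul_left _ _ h0]
    ring
  -- positivity of the theoretical spreads
  have hS0pos : ∀ (i : Fin m) t, t ∈ Set.Icc 0 𝕋 → 0 < S0obs i t := by
    intro i t ht
    have hB0 := hB0pos t ht
    have : S0obs i t = (B0obs t)⁻¹ * ∫ ω, Real.exp ⟪u i t + u0 t, X t ω⟫ ∂Q := by
      rw [hS0obs i t, ← integral_const_mul]
      congr 1; ext ω
      rw [inner_add_left, Real.exp_add]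
      field_simp
    rw [this]
    exact mul_pos (inv_pos.mpr hB0) (integral_exp_pos (huint i t ht))
  refine ⟨hB, hS, ?_⟩
  constructor
  · intro hfit t ht
    obtain ⟨h1, h2⟩ := hfit t ht
    constructor
    · have := (hB t ht).symm.trans h1
      rw [← this, Real.log_mul (Real.exp_pos _).ne' (hB0pos t ht).ne', Real.log_exp]
      ring
    · intro i
      have := (hS i t ht).symm.trans (h2 i)
      rw [← this, Real.log_mul (Real.exp_pos _).ne' (hS0pos i t ht).ne', Real.log_exp]
      ring
  · intro hv T hT
    obtain ⟨h1, h2⟩ := hv T hT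
    constructor
    · rw [hB T hT, h1, Real.exp_sub, Real.exp_log (hBM T hT), Real.exp_log (hB0pos T hT)]
      field_simp
      exact mul_div_cancel_right₀ _ (hB0pos T hT).ne'
    · intro i
      rw [hS i T hT, h2 i, Real.exp_sub, Real.exp_log (hSM i T hT),
        Real.exp_log (hS0pos i T hT)]
      field_simp
      exact mul_div_cancel_right₀ _ (hS0pos i T hT).ne'
end

section
/- Let (X,ℓ,λ,c,γ) be an affine short rate multi-curve model achieving an exact fit to the initial term structures, so that c_i(t) = log S^{M,δ_i}(0,t) − log S^{0,δ_i}(0,t), and suppose the spreads S^{0,δ_i}(t,T) of the model (X,0,λ,0,γ) are greater than one and ordered in i. Then: (i) for any i, if S^{M,δ_i}(0,t) ≥ S^{0,δ_i}(0,t) for all t ∈ [0,𝕋], then S^{δ_i}(t,T) ≥ 1 almost surely for all 0 ≤ t ≤ T ≤ 𝕋; (ii) for any i < j, if log S^{M,δ_i}(0,t) − log S^{M,δ_j}(0,t) ≤ log S^{0,δ_i}(0,t) − log S^{0,δ_j}(0,t) for all t ∈ [0,𝕋], then S^{δ_i}(t,T) ≤ S^{δ_j}(t,T) almost surely for all 0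 ≤ t ≤ T ≤ 𝕋. -/
open MeasureTheory RealInnerProductSpace

/-- Let `(X,ℓ,λ,c,γ)` be an affine short rate multi-curve model achieving an
exact fit to the initial term structures, so that
`c_i(t) = log S^{M,δ i}(0,t) - log S^{0,δ i}(0,t)`, and suppose the spreads `S^{0,δ i}(t,T)` of
the base model `(X,0,λ,0,γ)` are greater than one and ordered in `i`
(recall `S^{δ i}(t,T) = e^{c_i(T)} S^{0,δ i}(t,T)`).  Then:
(i) for any `i`, if `S^{M,δ i}(0,t) ≥ S^{0,δ i}(0,t)` for all `t ∈ [0,𝕋]`, then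
`S^{δ i}(t,T) ≥ 1` a.s. for all `0 ≤ t ≤ T ≤ 𝕋`;
(ii) for any `i < j`, if
`log S^{M,δ i}(0,t) - log S^{M,δ j}(0,t) ≤ log S^{0,δ i}(0,t) - log S^{0,δ j}(0,t)` for all
`t ∈ [0,𝕋]`, then `S^{δ i}(t,T) ≤ S^{δ j}(t,T)` a.s. for all `0 ≤ t ≤ T ≤ 𝕋`. -/
theorem stmt_12
    {Ω : Type*} {m0 : MeasurableSpace Ω} (Q : Measure Ω) [IsProbabilityMeasure Q]
    (𝕋 : ℝ) (h𝕋 : 0 ≤ 𝕋) (m : ℕ)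
    -- the spreads `S` of the model `(X,ℓ,λ,c,γ)` and the spreads `S0` of the base model
    -- `(X,0,λ,0,γ)`, related by `S^{δ i}(t,T) = e^{c_i(T)} S^{0,δ i}(t,T)`
    (S S0 : Fin m → ℝ → ℝ → Ω → ℝ)
    (c : Fin m → ℝ → ℝ)
    (hrel : ∀ (i : Fin m) t T, 0 ≤ t → t ≤ T → T ≤ 𝕋 →
      ∀ᵐ ω ∂Q, S i t T ω = Real.exp (c i T) * S0 i t T ω)
    -- the initially observed market spreads and the initial term structure of the base
    -- model spreads, both positive; the latter is deterministic: `S^{0,δ i}(0,t) = s0 i t`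
    (SM s0 : Fin m → ℝ → ℝ)
    (hSM : ∀ (i : Fin m) t, t ∈ Set.Icc 0 𝕋 → 0 < SM i t)
    (hs0pos : ∀ (i : Fin m) t, t ∈ Set.Icc 0 𝕋 → 0 < s0 i t)
    (hs0 : ∀ (i : Fin m) t, t ∈ Set.Icc 0 𝕋 → ∀ ω, S0 i 0 t ω = s0 i t)
    -- exact fit: `c_i(t) = log S^{M,δ i}(0,t) - log S^{0,δ i}(0,t)`
    (hc : ∀ (i : Fin m) t, t ∈ Set.Icc 0 𝕋 →
      c i t = Real.log (SM i t) - Real.log (s0 i t))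
    -- the base model spreads are greater than one and ordered in `i`
    (hge1 : ∀ (i : Fin m) t T, 0 ≤ t → t ≤ T → T ≤ 𝕋 →
      ∀ᵐ ω ∂Q, 1 ≤ S0 i t T ω)
    (hord : ∀ (i j : Fin m), i ≤ j → ∀ t T, 0 ≤ t → t ≤ T → T ≤ 𝕋 →
      ∀ᵐ ω ∂Q, S0 i t T ω ≤ S0 j t T ω) :
    -- conclusions (i) and (ii):
    (∀ i : Fin m, (∀ t, t ∈ Set.Icc 0 𝕋 → s0 i t ≤ SM i t) →
      ∀ t T, 0 ≤ t → t ≤ T → T ≤ 𝕋 → ∀ᵐ ω ∂Q, 1 ≤ S i t T ω) ∧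
    (∀ i j : Fin m, i < j →
      (∀ t, t ∈ Set.Icc 0 𝕋 →
        Real.log (SM i t) - Real.log (SM j t) ≤
          Real.log (s0 i t) - Real.log (s0 j t)) →
      ∀ t T, 0 ≤ t → t ≤ T → T ≤ 𝕋 → ∀ᵐ ω ∂Q, S i t T ω ≤ S j t T ω) := by
  constructor
  · intro i hi t T ht htT hT𝕋
    have hTmem : T ∈ Set.Icc 0 𝕋 := ⟨ht.trans htT, hT𝕋⟩
    filter_upwards [hrel i t T ht htT hT𝕋, hge1 i t T ht htT hT𝕋] with ω h1 h2
    rw [h1]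
    have hcnn : 0 ≤ c i T := by
      rw [hc i T hTmem, sub_nonneg]
      exact Real.log_le_log (hs0pos i T hTmem) (hi T hTmem)
    have : (1:ℝ) ≤ Real.exp (c i T) := Real.one_le_exp hcnn
    nlinarith
  · intro i j hij hle t T ht htT hT𝕋
    have hTmem : T ∈ Set.Icc 0 𝕋 := ⟨ht.trans htT, hT𝕋⟩
    filter_upwards [hrel i t T ht htT hT𝕋, hrel j t T ht htT hT𝕋,
      hge1 i t T ht htT hT𝕋, hord i j hij.le t T ht htT hT𝕋] with ω h1 h2 h3 h4
    rw [h1, h2]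
    have hcij : c i T ≤ c j T := by
      rw [hc i T hTmem, hc j T hTmem]
      have := hle T hTmem
      linarith
    have he : Real.exp (c i T) ≤ Real.exp (c j T) := Real.exp_le_exp.mpr hcij
    have h0 : (0:ℝ) ≤ S0 i t T ω := by linarith
    calc Real.exp (c i T) * S0 i t T ω ≤ Real.exp (c j T) * S0 i t T ω :=
          mul_le_mul_of_nonneg_right he h0
      _ ≤ Real.exp (c j T) * S0 j t T ω :=
          mul_le_mul_of_nonneg_left h4 (Real.exp_pos _).le
end

section
/- Let (X,ℓ,λ,c,γ) be an affine short rate multi-curve model with a single tenor δ, so that B_T = exp(∫_0^T (ℓ(s) + ⟨λ,X_s⟩) ds) and log S^{δ}(T,T) = c(T) + ⟨γ, X_T⟩. Then the density process N_t := E[ S^{δ}(T,T) / (B_T S^{δ}(0,T) B(0,T)) | F_t ] of the measure Q̃ with dQ̃/dQ = S^{δ}(T,T)/(B_T S^{δ}(0,T) B(0,T)) is given explicitly, for 0 ≤ t ≤ T, by N_t = (1/(S^{δ}(0,T) B(0,T))) exp( c(T) − ∫_0^T ℓ(s) ds + φ̃(T−t, γ, −λ) + ⟨ψ̃(T−t,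 γ, −λ), X_t⟩ − ⟨λ, ∫_0^t X_s ds⟩ ), where φ̃ and ψ̃ are the characteristic exponents of the process Y = (X, ∫_0^· X_s ds). -/
open MeasureTheory RealInnerProductSpace

/-- Let `(X,ℓ,λ,c,γ)` be an affine short rate multi-curve model with a
single tenor `δ`, so that `B_T = exp(∫_0^T (ℓ(s) + ⟨λ,X_s⟩) ds)` and
`log S^δ(T,T) = c(T) + ⟨γ,X_T⟩`.  Then the density process
`N_t = E[S^δ(T,T)/(B_T S^δ(0,T) B(0,T)) | F_t]` of the measure `Q̃` with
`dQ̃/dQ = S^δ(T,T)/(B_T S^δ(0,T) B(0,T))` is given explicitly, for `0 ≤ t ≤ T`, by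
`N_t = (1/(S^δ(0,T) B(0,T))) exp(c(T) - ∫_0^T ℓ(s) ds + φ̃(T-t,γ,-λ)
        + ⟨ψ̃(T-t,γ,-λ),X_t⟩ - ⟨λ,∫_0^t X_s ds⟩)`,
where `φ̃, ψ̃` are the characteristic exponents of `Y = (X, ∫_0^· X_s ds)`. -/
theorem stmt_19
    {V : Type*} [NormedAddCommGroup V] [InnerProductSpace ℝ V] [FiniteDimensional ℝ V]
    [MeasurableSpace V] [BorelSpace V]
    {Ω : Type*} {m0 : MeasurableSpace Ω} (Q : Measure Ω) [IsProbabilityMeasure Q]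
    (𝕋 : ℝ) (ℱ : Filtration ℝ m0)
    -- the driving process `X`, adapted with integrable paths, and `IntX t = ∫_0^t X_s ds`
    (X IntX : ℝ → Ω → V)
    (hXadapt : ∀ s, StronglyMeasurable[ℱ s] (X s))
    (hXpath : ∀ ω, ∀ s, s ∈ Set.Icc 0 𝕋 →
      IntervalIntegrable (fun s' => X s' ω) MeasureTheory.volume 0 s)
    (hIntX : ∀ s ω, IntX s ω = ∫ s' in (0:ℝ)..s, X s' ω)
    -- the characteristic exponents `φ̃, ψ̃` of the affine process `Y = (X, ∫_0^· X_s ds)`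
    (φt : ℝ → V → V → ℝ) (ψt : ℝ → V → V → V)
    (haff : ∀ (u1 u2 : V) (s T' : ℝ), 0 ≤ s → s ≤ T' → T' ≤ 𝕋 →
      Integrable (fun ω => Real.exp (⟪u1, X T' ω⟫ + ⟪u2, IntX T' ω⟫)) Q →
      Q[fun ω => Real.exp (⟪u1, X T' ω⟫ + ⟪u2, IntX T' ω⟫) | ℱ s] =ᵐ[Q]
        fun ω => Real.exp (φt (T' - s) u1 u2 + ⟪ψt (T' - s) u1 u2, X s ω⟫ +
          ⟪u2, IntX s ω⟫))
    -- the model ingredients `(ℓ, λ, c, γ)` for the single tenor `δ`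
    (δ : ℝ) (hδ : 0 < δ)
    (ℓ : ℝ → ℝ) (hℓ : IntervalIntegrable ℓ MeasureTheory.volume 0 𝕋)
    (lam γv : V) (c : ℝ → ℝ)
    -- the reset date `T` and the exponential moment condition
    (t T : ℝ) (ht : 0 ≤ t) (htT : t ≤ T) (hT𝕋 : T ≤ 𝕋)
    (hmom : Integrable (fun ω => Real.exp (⟪γv, X T ω⟫ - ⟪lam, IntX T ω⟫)) Q)
    -- the OIS bank account `B_T = exp(∫_0^T (ℓ(s) + ⟨λ,X_s⟩) ds)`
    (B : ℝ → Ω → ℝ)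
    (hB : ∀ s ω, B s ω = Real.exp (∫ s' in (0:ℝ)..s, (ℓ s' + ⟪lam, X s' ω⟫)))
    -- the spot spread `log S^δ(T,T) = c(T) + ⟨γ,X_T⟩`
    (S : ℝ → ℝ → Ω → ℝ)
    (hSpot : ∀ s, s ∈ Set.Icc 0 𝕋 → ∀ ω, S s s ω = Real.exp (c s + ⟪γv, X s ω⟫))
    -- the time-0 bond price `B(0,T) = E[1/B_T]` and spread
    -- `S^δ(0,T) = E^{Q^T}[S^δ(T,T)] = E[S^δ(T,T)/(B_T B(0,T))]`
    (b0 s0 : ℝ)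
    (hb0 : b0 = ∫ ω, (B T ω)⁻¹ ∂Q)
    (hs0 : s0 = ∫ ω, S T T ω / (B T ω * b0) ∂Q)
    -- the density process `N_t = E[S^δ(T,T)/(B_T S^δ(0,T) B(0,T)) | F_t]` of `Q̃`
    (Nt : ℝ → Ω → ℝ)
    (hNt : ∀ s, 0 ≤ s → s ≤ T →
      Nt s =ᵐ[Q] Q[fun ω => S T T ω / (B T ω * s0 * b0) | ℱ s]) :
    -- conclusion: the explicit formula for the density process
    Nt t =ᵐ[Q] fun ω =>
      (1 / (s0 * b0)) *
        Real.exp (c T - (∫ s in (0:ℝ)..T, ℓ s) + φt (T - t) γv (-lam) +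
          ⟪ψt (T - t) γv (-lam), X t ω⟫ - ⟪lam, IntX t ω⟫) := by

  have hT0 : (0:ℝ) ≤ T := le_trans ht htT
  have hTmem : T ∈ Set.Icc (0:ℝ) 𝕋 := ⟨hT0, hT𝕋⟩
  set C : ℝ := (1 / (s0 * b0)) * Real.exp (c T - ∫ s in (0:ℝ)..T, ℓ s) with hC
  -- rewrite the random variable
  have hfun : (fun ω => S T T ω / (B T ω * s0 * b0)) =
      fun ω => C * Real.exp (⟪γv, X T ω⟫ + ⟪-lam, IntX T ω⟫) := by
    funext ω
    have hXT := hXpath ω T hTmem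
    have hℓT : IntervalIntegrable ℓ MeasureTheory.volume 0 T :=
      hℓ.mono_set (by
        rw [Set.uIcc_of_le hT0, Set.uIcc_of_le (hT0.trans hT𝕋)]
        exact Set.Icc_subset_Icc le_rfl hT𝕋)
    have hinnInt : IntervalIntegrable (fun s' => ⟪lam, X s' ω⟫) MeasureTheory.volume 0 T :=
      ⟨(innerSL ℝ lam).integrable_comp hXT.1, (innerSL ℝ lam).integrable_comp hXT.2⟩
    have hsplit : (∫ s' in (0:ℝ)..T, (ℓ s' + ⟪lam, X s' ω⟫)) =
        (∫ s in (0:ℝ)..T, ℓ s) + ⟪lam, IntX T ω⟫ := by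
      rw [intervalIntegral.integral_add hℓT hinnInt, hIntX]
      congr 1
      exact (innerSL ℝ lam).intervalIntegral_comp_comm hXT
    rw [hSpot T hTmem ω, hB T ω, hsplit, hC]
    simp only [Real.exp_add, Real.exp_sub, inner_neg_left, Real.exp_neg, one_div,
      div_eq_mul_inv, mul_inv]
    ring
  -- moment condition for `u2 = -lam`
  have hmom' : Integrable (fun ω => Real.exp (⟪γv, X T ω⟫ + ⟪-lam, IntX T ω⟫)) Q := by
    simpa [inner_neg_left, sub_eq_add_neg] using hmom
  have haffT := haff γv (-lam) t T ht htT hT𝕋 hmom'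
  have hsmul : (fun ω => S T T ω / (B T ω * s0 * b0)) =
      C • fun ω => Real.exp (⟪γv, X T ω⟫ + ⟪-lam, IntX T ω⟫) := by
    rw [hfun]; rfl
  have hce : Q[fun ω => S T T ω / (B T ω * s0 * b0) | ℱ t] =ᵐ[Q]
      C • Q[fun ω => Real.exp (⟪γv, X T ω⟫ + ⟪-lam, IntX T ω⟫) | ℱ t] := by
    rw [hsmul]; exact condExp_smul C (fun ω => Real.exp (⟪γv, X T ω⟫ + ⟪-lam, IntX T ω⟫)) (ℱ t)
  refine (hNt t ht htT).trans (hce.trans ?_)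
  filter_upwards [haffT] with ω hω
  simp only [Pi.smul_apply, smul_eq_mul, hω, hC]
  rw [inner_neg_left, mul_assoc, ← Real.exp_add]
  ring_nf
end
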